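/- arXiv:0711.3878 — 5 statements merged into one kernel-verified Lean document; each statement's English description precedes it below -/
import Mathlib

section
/- Let p be a prime, k a finite field of characteristic p, and f ∈ k[T] a separable polynomial of degree n which factors into ν irreducible factors over k. If p is odd, then the discriminant of f is a square in k^× if and only if n - ν is even. -/
open Polynomial IntermediateField

lemma aux_card_le_of_pow_eq {L : Type*} [Field L] [DecidableEq L] {m : ℕ} (hm : 2 ≤ m)
    (S : Finset L) (hS : ∀ x ∈ S, x ^ m = x) : S.card ≤ m := by
  have hdeg : ((X : L[X]) ^ m - X).degree = (m : WithBot ℕ) := by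
    rw [degree_sub_eq_left_of_degree_lt]
    · exact degree_X_pow m
    · rw [degree_X, degree_X_pow]
      exact_mod_cast (by omega : 1 < m)
  have hPne : ((X : L[X]) ^ m - X) ≠ 0 := by
    intro h
    rw [h, degree_zero] at hdeg
    exact (by simp : (⊥ : WithBot ℕ) ≠ (m : WithBot ℕ)) hdeg
  have hnat : ((X : L[X]) ^ m - X).natDegree = m := natDegree_eq_of_degree_eq_some hdeg
  have hsub : S ⊆ ((X : L[X]) ^ m - X).roots.toFinset := by
    intro x hx
    rw [Multiset.mem_toFinset, mem_roots hPne]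
    simp [IsRoot, hS x hx]
  calc S.card ≤ _ := Finset.card_le_card hsub
    _ ≤ Multiset.card ((X : L[X]) ^ m - X).roots := Multiset.toFinset_card_le _
    _ ≤ ((X : L[X]) ^ m - X).natDegree := card_roots' _
    _ = m := hnat

lemma aux_card_image_eq {α β γ : Type*} [DecidableEq β] [DecidableEq γ]
    (s : Finset α) (c : α → β) (e : α → γ)
    (h : ∀ i ∈ s, ∀ j ∈ s, c i = c j ↔ e i = e j) :
    (s.image c).card = (s.image e).card := by
  classical
  refine Finset.card_bij (fun b hb => e (Finset.mem_image.mp hb).choose) ?_ ?_ ?_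
  · intro b hb
    exact Finset.mem_image_of_mem e (Finset.mem_image.mp hb).choose_spec.1
  · intro b1 hb1 b2 hb2 heq
    obtain ⟨ha1, hc1⟩ := (Finset.mem_image.mp hb1).choose_spec
    obtain ⟨ha2, hc2⟩ := (Finset.mem_image.mp hb2).choose_spec
    rw [← hc1, ← hc2]
    exact (h _ ha1 _ ha2).mpr heq
  · intro g hg
    obtain ⟨j, hj, rfl⟩ := Finset.mem_image.mp hg
    refine ⟨c j, Finset.mem_image_of_mem c hj, ?_⟩
    obtain ⟨ha, hc⟩ := (Finset.mem_image.mp (Finset.mem_image_of_mem c hj)).choose_spec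
    exact (h _ ha _ hj).mp hc

lemma aux_card_le_sum (s : Multiset ℕ) (h : ∀ x ∈ s, 1 ≤ x) : Multiset.card s ≤ s.sum := by
  induction s using Multiset.induction_on with
  | empty => simp
  | cons a s ih =>
    simp only [Multiset.card_cons, Multiset.sum_cons]
    have h1 := h a (Multiset.mem_cons_self a s)
    have h2 := ih (fun x hx => h x (Multiset.mem_cons_of_mem hx))
    omega

lemma aux_fixed (k : Type*) [Field k] [Fintype k] (K : Type*) [Field K]
    [Algebra k K] (x : K) (hx : x ^ (Fintype.card k) = x) :
    ∃ y : k, algebraMap k K y = x := by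
  classical
  by_contra hno
  push_neg at hno
  set S : Finset K := insert x (Finset.univ.image (algebraMap k K)) with hS
  have hq2 : 2 ≤ Fintype.card k := Fintype.one_lt_card
  have hcard : S.card = Fintype.card k + 1 := by
    rw [hS, Finset.card_insert_of_notMem, Finset.card_image_of_injective _
      (algebraMap k K).injective, Finset.card_univ]
    simp only [Finset.mem_image]
    rintro ⟨y, -, hy⟩
    exact hno y hy
  have hle := aux_card_le_of_pow_eq hq2 S ?_
  · omega
  · intro z hz
    rw [hS, Finset.mem_insert] at hz
    rcases hz with rfl | hz
    · exact hx
    · obtain ⟨y, -, rfl⟩ := Finset.mem_image.mp hz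
      rw [← map_pow, FiniteField.pow_card]

lemma aux_orbit {p : ℕ} [Fact p.Prime] (k : Type) [Field k] [Fintype k] [CharP k p]
    (x : AlgebraicClosure k) {e : ℕ} (he : 0 < e)
    (hx : x ^ (Fintype.card k) ^ e = x) :
    (minpoly k x).natDegree ≤ e := by
  classical
  obtain ⟨m, hpp, hcard⟩ := FiniteField.card k p
  have hq2 : 1 < Fintype.card k := Fintype.one_lt_card
  have hxi : IsIntegral k x := IsAlgebraic.isIntegral (Algebra.IsAlgebraic.isAlgebraic x)
  by_contra hlt
  push_neg at hlt
  haveI := IntermediateField.adjoin.finiteDimensional hxi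
  haveI : Finite (↥k⟮x⟯) := Module.finite_of_finite k
  haveI : Fintype (↥k⟮x⟯) := Fintype.ofFinite _
  have hcardF : Fintype.card (↥k⟮x⟯) = Fintype.card k ^ (minpoly k x).natDegree := by
    rw [Module.card_eq_pow_finrank (K := k) (V := ↥k⟮x⟯), IntermediateField.adjoin.finrank hxi]
  haveI : ExpChar (AlgebraicClosure k) p := ExpChar.prime Fact.out
  set ψe : AlgebraicClosure k →+* AlgebraicClosure k :=
    iterateFrobenius (AlgebraicClosure k) p (m * e) with hψe
  have hψeval : ∀ z : AlgebraicClosure k, ψe z = z ^ (Fintype.card k) ^ e := by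
    intro z
    rw [hψe, iterateFrobenius_def, pow_mul, ← hcard]
  have hψalg : ∀ a : k, ψe (algebraMap k (AlgebraicClosure k) a)
      = algebraMap k (AlgebraicClosure k) a := by
    intro a
    rw [hψeval, ← map_pow, FiniteField.pow_card_pow]
  set Ψ : AlgebraicClosure k →ₐ[k] AlgebraicClosure k :=
    { toRingHom := ψe, commutes' := hψalg } with hΨ
  have hΨx : Ψ x = x := by
    show ψe x = x
    rw [hψeval, hx]
  have hfix : ∀ y : ↥k⟮x⟯, (y : AlgebraicClosure k) ^ (Fintype.card k) ^ e
      = (y : AlgebraicClosure k) := by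
    intro y
    have hy : (y : AlgebraicClosure k) ∈ Algebra.adjoin k ({x} : Set (AlgebraicClosure k)) := by
      rw [← IntermediateField.adjoin_simple_toSubalgebra_of_isAlgebraic hxi.isAlgebraic]
      exact y.2
    rw [Algebra.adjoin_singleton_eq_range_aeval] at hy
    rw [AlgHom.mem_range] at hy
    obtain ⟨h, hh⟩ := hy
    rw [← hψeval]
    show Ψ (y : AlgebraicClosure k) = y
    rw [← hh, ← Polynomial.aeval_algHom_apply, hΨx]
  set S : Finset (AlgebraicClosure k) :=
    Finset.univ.image (fun y : ↥k⟮x⟯ => (y : AlgebraicClosure k)) with hS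
  have hScard : S.card = Fintype.card k ^ (minpoly k x).natDegree := by
    rw [hS, Finset.card_image_of_injective _ Subtype.coe_injective, Finset.card_univ, hcardF]
  have hle : Fintype.card k ^ (minpoly k x).natDegree ≤ Fintype.card k ^ e := by
    rw [← hScard]
    apply aux_card_le_of_pow_eq (Nat.one_lt_pow he.ne' hq2) S
    intro z hz
    obtain ⟨y, -, rfl⟩ := Finset.mem_image.mp hz
    exact hfix y
  have : (minpoly k x).natDegree ≤ e := (Nat.pow_le_pow_iff_right hq2).mp hle
  omega
lemma aux_sign {n : ℕ} (σ : Equiv.Perm (Fin n)) {β : Type*} [DecidableEq β]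
    (c : Fin n → β) (hc : ∀ i j, c i = c j ↔ σ.SameCycle i j) :
    Equiv.Perm.sign σ = (-1 : ℤˣ) ^ (n - (Finset.univ.image c).card) := by
  classical
  set φ : Fin n → (Fin n) ⊕ (Equiv.Perm (Fin n)) :=
    fun i => if i ∈ σ.support then Sum.inr (σ.cycleOf i) else Sum.inl i with hφ
  have hfix : ∀ i ∉ σ.support, ∀ j, σ.SameCycle i j → i = j := by
    intro i hi j hj
    have hσi : σ i = i := by simpa using hi
    obtain ⟨t, -, ht⟩ := hj.exists_pow_eq'
    have hpow : ∀ t : ℕ, (σ ^ t) i = i := by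
      intro t
      induction t with
      | zero => simp
      | succ t ih => rw [pow_succ, Equiv.Perm.mul_apply, hσi, ih]
    rw [← ht, hpow]
  have hfibφ : ∀ i j, φ i = φ j ↔ σ.SameCycle i j := by
    intro i j
    by_cases hi : i ∈ σ.support
    · by_cases hj : j ∈ σ.support
      · simp only [hφ, if_pos hi, if_pos hj, Sum.inr.injEq]
        constructor
        · intro h
          have hjj : j ∈ (σ.cycleOf j).support :=
            Equiv.Perm.mem_support_cycleOf_iff.mpr ⟨Equiv.Perm.SameCycle.refl _ _, hj⟩
          rw [← h] at hjj
          exact (Equiv.Perm.mem_support_cycleOf_iff.mp hjj).1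
        · exact fun h => h.cycleOf_eq
      · simp only [hφ, if_pos hi, if_neg hj]
        constructor
        · intro h; exact absurd h (by simp)
        · intro h
          exact absurd (by rw [hfix j hj i h.symm]; exact hi : j ∈ σ.support) hj
    · by_cases hj : j ∈ σ.support
      · simp only [hφ, if_neg hi, if_pos hj]
        constructor
        · intro h; exact absurd h (by simp)
        · intro h
          exact absurd (by rw [hfix i hi j h]; exact hj : i ∈ σ.support) hi
      · simp only [hφ, if_neg hi, if_neg hj, Sum.inl.injEq]
        constructor
        · rintro rfl; exact Equiv.Perm.SameCycle.refl _ _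
        · exact fun h => hfix i hi j h
  have h1 : (Finset.univ.image c).card = (Finset.univ.image φ).card :=
    aux_card_image_eq Finset.univ c φ (fun i _ j _ => (hc i j).trans (hfibφ i j).symm)
  have h2 : Finset.univ.image φ = (σ.support.image φ) ∪ (σ.supportᶜ.image φ) := by
    rw [← Finset.image_union, Finset.union_compl]
  have hsuppim : σ.support.image φ = (σ.cycleFactorsFinset).image Sum.inr := by
    ext x
    simp only [Finset.mem_image, hφ]
    constructor
    · rintro ⟨i, hi, rfl⟩
      rw [if_pos hi]
      exact ⟨σ.cycleOf i, Equiv.Perm.cycleOf_mem_cycleFactorsFinset_iff.mpr hi, rfl⟩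
    · rintro ⟨τ, hτ, rfl⟩
      have hcyc := (Equiv.Perm.mem_cycleFactorsFinset_iff.mp hτ).1
      have hagree := (Equiv.Perm.mem_cycleFactorsFinset_iff.mp hτ).2
      obtain ⟨x, hx1, -⟩ := hcyc
      have hxs : x ∈ τ.support := Equiv.Perm.mem_support.mpr hx1
      have hxσ : x ∈ σ.support := by
        rw [Equiv.Perm.mem_support, ← hagree x hxs]
        exact hx1
      refine ⟨x, hxσ, ?_⟩
      rw [if_pos hxσ, ← Equiv.Perm.cycle_is_cycleOf hxs hτ]
  have hsuppcard : (σ.support.image φ).card = σ.cycleFactorsFinset.card := by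
    rw [hsuppim, Finset.card_image_of_injective _ Sum.inr_injective]
  have hcomplcard : (σ.supportᶜ.image φ).card = n - σ.support.card := by
    rw [Finset.card_image_of_injOn, Finset.card_compl, Fintype.card_fin]
    intro i hi j hj hij
    rw [Finset.mem_coe, Finset.mem_compl] at hi hj
    simp only [hφ, if_neg hi, if_neg hj, Sum.inl.injEq] at hij
    exact hij
  have hdisj : Disjoint (σ.support.image φ) (σ.supportᶜ.image φ) := by
    rw [Finset.disjoint_left]
    rintro x hx1 hx2
    obtain ⟨i, hi, rfl⟩ := Finset.mem_image.mp hx1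
    obtain ⟨j, hj, hji⟩ := Finset.mem_image.mp hx2
    rw [Finset.mem_compl] at hj
    simp only [hφ, if_pos hi, if_neg hj] at hji
    exact absurd hji (by simp)
  have h3 : (Finset.univ.image φ).card = σ.cycleFactorsFinset.card + (n - σ.support.card) := by
    rw [h2, Finset.card_union_of_disjoint hdisj, hsuppcard, hcomplcard]
  have hct : Multiset.card σ.cycleType = σ.cycleFactorsFinset.card := by
    rw [Equiv.Perm.cycleType_def, Multiset.card_map]
    rfl
  have hsum := Equiv.Perm.sum_cycleType σ
  have hsupple : σ.support.card ≤ n := by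
    simpa using Finset.card_le_univ σ.support
  have hctle : σ.cycleFactorsFinset.card ≤ σ.support.card := by
    rw [← hct, ← hsum]
    exact aux_card_le_sum _ (fun x hx => by have := Equiv.Perm.two_le_of_mem_cycleType hx; omega)
  rw [Equiv.Perm.sign_of_cycleType, h1, h3, hsum, hct]
  have he : n - (σ.cycleFactorsFinset.card + (n - σ.support.card)) =
      σ.support.card - σ.cycleFactorsFinset.card := by omega
  rw [he]
  have h4 : σ.support.card + σ.cycleFactorsFinset.card =
      (σ.support.card - σ.cycleFactorsFinset.card) + 2 * σ.cycleFactorsFinset.card := by omega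
  rw [h4, pow_add, pow_mul]
  norm_num

open Polynomial in
/-- Stickelberger–Pellet–Voronoï: over a finite field `k` of odd characteristic `p`, the
discriminant of a separable polynomial `f` of degree `n` with `ν` irreducible factors
(the discriminant being `lc(f)^{2n-2} ∏_{i<j} (rᵢ - rⱼ)²`, an element `d` of `k`) is a
square in `k^×` if and only if `n - ν` is even. -/
theorem stmt0 (p : ℕ) [Fact p.Prime] (hp : Odd p)
    (k : Type) [Field k] [Fintype k] [DecidableEq k] [CharP k p]
    (f : Polynomial k) (hf : f.Separable) (hf0 : f ≠ 0)
    (n : ℕ) (hn : n = f.natDegree)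
    (ν : ℕ) (hν : ν = (UniqueFactorizationMonoid.factors f).toFinset.card)
    (r : Fin n → AlgebraicClosure k)
    (hr : f.map (algebraMap k (AlgebraicClosure k)) =
      C (algebraMap k (AlgebraicClosure k) f.leadingCoeff) * ∏ i, (X - C (r i)))
    (d : k)
    (hd : algebraMap k (AlgebraicClosure k) d =
      algebraMap k (AlgebraicClosure k) f.leadingCoeff ^ (2 * n - 2) *
        ∏ i : Fin n, ∏ j ∈ Finset.univ.filter (fun j => i < j), (r i - r j) ^ 2) :
    IsSquare d ↔ Even (n - ν) := by
  classical
  set alg := algebraMap k (AlgebraicClosure k) with halg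
  obtain ⟨m, hpp, hcard⟩ := FiniteField.card k p
  haveI : ExpChar (AlgebraicClosure k) p := ExpChar.prime Fact.out
  set ψ : AlgebraicClosure k →+* AlgebraicClosure k :=
    iterateFrobenius (AlgebraicClosure k) p m with hψdef
  have hψ : ∀ x : AlgebraicClosure k, ψ x = x ^ Fintype.card k := by
    intro x
    rw [hψdef, iterateFrobenius_def, ← hcard]
  have hψalg : ∀ a : k, ψ (alg a) = alg a := by
    intro a
    rw [hψ, ← map_pow, FiniteField.pow_card]
  have hinj : Function.Injective alg := (algebraMap k (AlgebraicClosure k)).injective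
  have hψinj : Function.Injective ψ := ψ.injective
  -- roots description
  have heval : ∀ x : AlgebraicClosure k,
      (f.map alg).eval x = alg f.leadingCoeff * ∏ i, (x - r i) := by
    intro x
    rw [hr]
    simp [eval_prod]
  have hlc : alg f.leadingCoeff ≠ 0 := by
    rw [map_ne_zero_iff alg hinj]
    exact leadingCoeff_ne_zero.mpr hf0
  have hroot : ∀ i, (f.map alg).eval (r i) = 0 := by
    intro i
    rw [heval]
    rw [Finset.prod_eq_zero (Finset.mem_univ i) (sub_self (r i)), mul_zero]
  have hroot' : ∀ x : AlgebraicClosure k, (f.map alg).eval x = 0 → ∃ i, x = r i := by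
    intro x hx
    rw [heval] at hx
    rcases mul_eq_zero.mp hx with h | h
    · exact absurd h hlc
    · obtain ⟨i, -, hi⟩ := Finset.prod_eq_zero_iff.mp h
      exact ⟨i, sub_eq_zero.mp hi⟩
  have hrinj : Function.Injective r := by
    have h1 : (f.map alg).Separable := hf.map
    rw [hr] at h1
    exact separable_prod_X_sub_C_iff.mp h1.of_mul_right
  -- Frobenius permutes the roots
  have hmapψ : (f.map alg).map ψ = f.map alg := by
    rw [Polynomial.map_map]
    congr 1
    exact RingHom.ext fun a => hψalg a
  have hψroot : ∀ i, ∃ j, ψ (r i) = r j := by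
    intro i
    apply hroot'
    have h1 : (f.map alg).eval (ψ (r i)) = ψ ((f.map alg).eval (r i)) := by
      conv_lhs => rw [← hmapψ]
      rw [eval_map, eval₂_hom]
    rw [h1, hroot i, map_zero]
  choose s0 hs0 using hψroot
  have hs0inj : Function.Injective s0 := by
    intro i j h
    apply hrinj
    apply hψinj
    rw [hs0, hs0, h]
  set σ : Equiv.Perm (Fin n) := Equiv.ofBijective s0
    (Finite.injective_iff_bijective.mp hs0inj) with hσdef
  have hσ : ∀ i, r (σ i) = ψ (r i) := fun i => (hs0 i).symm
  have hσpow : ∀ (t : ℕ) (i : Fin n), r ((σ ^ t) i) = ψ^[t] (r i) := by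
    intro t
    induction t with
    | zero => simp
    | succ t ih =>
      intro i
      rw [pow_succ', Equiv.Perm.mul_apply, hσ, ih, Function.iterate_succ_apply']
  have hψiter : ∀ (t : ℕ) (x : AlgebraicClosure k), ψ^[t] x = x ^ (Fintype.card k) ^ t := by
    intro t
    induction t with
    | zero => simp
    | succ t ih =>
      intro x
      rw [Function.iterate_succ_apply', ih, hψ, ← pow_mul, pow_succ]
  -- minimal polynomials
  set c : Fin n → Polynomial k := fun i => minpoly k (r i) with hc
  have hint : ∀ x : AlgebraicClosure k, IsIntegral k x :=
    fun x => IsAlgebraic.isIntegral (Algebra.IsAlgebraic.isAlgebraic x)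
  set Ψ : AlgebraicClosure k →ₐ[k] AlgebraicClosure k :=
    { toRingHom := ψ, commutes' := hψalg } with hΨ
  have hcσ : ∀ i, c (σ i) = c i := by
    intro i
    have h1 := minpoly.algHom_eq Ψ hψinj (r i)
    rw [hc]
    show minpoly k (r (σ i)) = minpoly k (r i)
    rw [hσ i]
    exact h1
  have hcσpow : ∀ (t : ℕ) (i : Fin n), c ((σ ^ t) i) = c i := by
    intro t
    induction t with
    | zero => simp
    | succ t ih =>
      intro i
      rw [pow_succ, Equiv.Perm.mul_apply, ih, hcσ]
  have hdir1 : ∀ i j, σ.SameCycle i j → c i = c j := by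
    intro i j h
    obtain ⟨t, -, ht⟩ := h.exists_pow_eq'
    rw [← ht, hcσpow]
  have haev : ∀ i, (Polynomial.aeval (r i)) f = 0 := by
    intro i
    rw [aeval_def, ← eval_map]
    exact hroot i
  have hmon : ∀ i, (c i).Monic := fun i => minpoly.monic (hint (r i))
  have hcirr : ∀ i, Irreducible (c i) := fun i => minpoly.irreducible (hint (r i))
  have hcaev : ∀ i, (Polynomial.aeval (r i)) (c i) = 0 := fun i => minpoly.aeval k (r i)
  -- distinctness along the orbit
  have hdist : ∀ (i : Fin n) (s t : ℕ), s < t → t < (c i).natDegree →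
      ψ^[s] (r i) ≠ ψ^[t] (r i) := by
    intro i s t hst htd heq
    have h1 : ψ^[t] (r i) = ψ^[s] (ψ^[t - s] (r i)) := by
      rw [← Function.iterate_add_apply]
      congr 1
      omega
    rw [h1] at heq
    have h2 : r i = ψ^[t - s] (r i) := (Function.Injective.iterate hψinj s) heq
    have h3 : (r i) ^ (Fintype.card k) ^ (t - s) = r i := by
      rw [← hψiter, ← h2]
    have h4 := aux_orbit (p := p) k (r i) (by omega : 0 < t - s) h3
    have h5 : (c i).natDegree ≤ t - s := h4
    omega
  have hdir2 : ∀ i j, c i = c j → σ.SameCycle i j := by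
    intro i j hcij
    have horb : ((Finset.univ : Finset (Fin n)).filter fun j' => σ.SameCycle i j') =
        ((Finset.univ : Finset (Fin n)).filter fun j' => c j' = c i) := by
      apply Finset.eq_of_subset_of_card_le
      · intro j' hj'
        rw [Finset.mem_filter] at hj' ⊢
        exact ⟨hj'.1, (hdir1 i j' hj'.2).symm⟩
      · -- card (fiber) ≤ deg ≤ card (orbit)
        have hfibcard : ((Finset.univ : Finset (Fin n)).filter fun j' => c j' = c i).card ≤
            (c i).natDegree := by
          have hgne : ((c i).map alg) ≠ 0 := by
            intro h0
            exact (hmon i).ne_zero (by simpa [Polynomial.map_eq_zero_iff hinj] using h0)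
          calc ((Finset.univ : Finset (Fin n)).filter fun j' => c j' = c i).card
              ≤ (((c i).map alg).roots.toFinset).card := by
                apply Finset.card_le_card_of_injOn r
                · intro j' hj'
                  rw [Finset.mem_coe, Finset.mem_filter] at hj'
                  rw [Finset.mem_coe, Multiset.mem_toFinset, mem_roots hgne]
                  show ((c i).map alg).eval (r j') = 0
                  rw [eval_map, ← aeval_def, ← hj'.2]
                  exact hcaev j'
                · intro a _ b _ hab
                  exact hrinj hab
            _ ≤ Multiset.card (((c i).map alg).roots) := Multiset.toFinset_card_le _
            _ ≤ ((c i).map alg).natDegree := card_roots' _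
            _ = (c i).natDegree := natDegree_map alg
        have horbcard : (c i).natDegree ≤
            ((Finset.univ : Finset (Fin n)).filter fun j' => σ.SameCycle i j').card := by
          have := Finset.card_le_card_of_injOn
            (f := fun t : Fin (c i).natDegree => (σ ^ (t : ℕ)) i)
            (s := Finset.univ)
            (t := (Finset.univ : Finset (Fin n)).filter fun j' => σ.SameCycle i j')
            ?_ ?_
          · simpa using this
          · intro t _
            rw [Finset.mem_coe, Finset.mem_filter]
            exact ⟨Finset.mem_univ _, ⟨(t : ℤ), by rw [zpow_natCast]⟩⟩
          · intro a _ b _ hab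
            by_contra hne
            rcases lt_trichotomy (a : ℕ) (b : ℕ) with hlt | heq | hlt
            · exact hdist i a b hlt b.2 (by rw [← hσpow, ← hσpow]; exact congrArg r hab)
            · exact hne (Fin.ext heq)
            · exact hdist i b a hlt a.2 (by rw [← hσpow, ← hσpow]; exact (congrArg r hab).symm)
        exact hfibcard.trans horbcard
    have hjmem : j ∈ (Finset.univ : Finset (Fin n)).filter fun j' => c j' = c i := by
      rw [Finset.mem_filter]
      exact ⟨Finset.mem_univ _, hcij.symm⟩
    rw [← horb, Finset.mem_filter] at hjmem
    exact hjmem.2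
  have hfibiff : ∀ i j, c i = c j ↔ σ.SameCycle i j := fun i j => ⟨hdir2 i j, hdir1 i j⟩
  -- ν equals the number of orbits
  have hsqf : Squarefree f := hf.squarefree
  have himg : Finset.univ.image c = (UniqueFactorizationMonoid.normalizedFactors f).toFinset := by
    ext g
    simp only [Finset.mem_image, Multiset.mem_toFinset, Finset.mem_univ, true_and]
    constructor
    · rintro ⟨i, rfl⟩
      obtain ⟨g', hg'mem, hassoc⟩ :=
        UniqueFactorizationMonoid.exists_mem_normalizedFactors_of_dvd hf0 (hcirr i)
          (minpoly.dvd k (r i) (haev i))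
      have hg'ne : g' ≠ 0 := fun h0 =>
        UniqueFactorizationMonoid.zero_notMem_normalizedFactors f (h0 ▸ hg'mem)
      have hg'mon : g'.Monic := by
        rw [← UniqueFactorizationMonoid.normalize_normalized_factor g' hg'mem]
        exact monic_normalize hg'ne
      rw [Polynomial.eq_of_monic_of_associated (hmon i) hg'mon hassoc]
      exact hg'mem
    · intro hg
      have hgirr := UniqueFactorizationMonoid.irreducible_of_normalized_factor g hg
      have hgne : g ≠ 0 := hgirr.ne_zero
      have hgmon : g.Monic := by
        rw [← UniqueFactorizationMonoid.normalize_normalized_factor g hg]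
        exact monic_normalize hgne
      have hgdvd : g ∣ f := UniqueFactorizationMonoid.dvd_of_mem_normalizedFactors hg
      have hdeg0 : (g.map alg).degree ≠ 0 := by
        rw [degree_map]
        exact (degree_pos_of_irreducible hgirr).ne'
      obtain ⟨y, hy⟩ := IsAlgClosed.exists_root (g.map alg) hdeg0
      have hyf : (f.map alg).eval y = 0 := by
        have hdv : (g.map alg) ∣ (f.map alg) := Polynomial.map_dvd _ hgdvd
        exact eval_eq_zero_of_dvd_of_eval_eq_zero hdv hy
      obtain ⟨i, rfl⟩ := hroot' y hyf
      refine ⟨i, ?_⟩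
      show minpoly k (r i) = g
      symm
      apply minpoly.eq_of_irreducible_of_monic hgirr ?_ hgmon
      rw [aeval_def, ← eval_map]
      exact hy
  have hnodupf : (UniqueFactorizationMonoid.factors f).Nodup := by
    rw [Multiset.nodup_iff_count_le_one]
    intro a
    by_contra hcount
    push_neg at hcount
    have hmem : a ∈ UniqueFactorizationMonoid.factors f := Multiset.count_pos.mp (by omega)
    have hrep : Multiset.replicate 2 a ≤ UniqueFactorizationMonoid.factors f :=
      Multiset.le_count_iff_replicate_le.mp (by omega)
    have hdvd : a * a ∣ f := by
      have h1 : (Multiset.replicate 2 a).prod ∣ (UniqueFactorizationMonoid.factors f).prod :=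
        Multiset.prod_dvd_prod_of_le hrep
      rw [Multiset.prod_replicate, pow_two] at h1
      exact h1.trans (UniqueFactorizationMonoid.factors_prod hf0).dvd
    exact (UniqueFactorizationMonoid.irreducible_of_factor a hmem).not_isUnit (hsqf a hdvd)
  have hnodupn : (UniqueFactorizationMonoid.normalizedFactors f).Nodup :=
    (UniqueFactorizationMonoid.squarefree_iff_nodup_normalizedFactors hf0).mp hsqf
  have hν3 : ν = (Finset.univ.image c).card := by
    rw [himg, hν, Multiset.toFinset_card_of_nodup hnodupf,
      Multiset.toFinset_card_of_nodup hnodupn]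
    simp [UniqueFactorizationMonoid.normalizedFactors, Multiset.card_map]
  -- the sign computation
  have hsign : Equiv.Perm.sign σ = (-1 : ℤˣ) ^ (n - ν) := by
    rw [hν3]
    exact aux_sign σ c hfibiff
  -- vandermonde / discriminant
  set D : AlgebraicClosure k := (Matrix.vandermonde r).det with hD
  set δ : AlgebraicClosure k := alg f.leadingCoeff ^ (n - 1) * D with hδdef
  have hDne : D ≠ 0 := Matrix.det_vandermonde_ne_zero_iff.mpr hrinj
  have hδne : δ ≠ 0 := mul_ne_zero (pow_ne_zero _ hlc) hDne
  have hIoi : ∀ i : Fin n, Finset.univ.filter (fun j => i < j) = Finset.Ioi i := by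
    intro i
    ext j
    simp [Finset.mem_Ioi]
  have hδ2 : alg d = δ * δ := by
    rw [hd]
    have h1 : ∀ i : Fin n, ∏ j ∈ Finset.univ.filter (fun j => i < j), (r i - r j) ^ 2
        = (∏ j ∈ Finset.Ioi i, (r j - r i)) ^ 2 := by
      intro i
      rw [hIoi, ← Finset.prod_pow]
      apply Finset.prod_congr rfl
      intro j _
      rw [← neg_sub (r j) (r i), neg_sq]
    calc alg f.leadingCoeff ^ (2 * n - 2) *
          ∏ i : Fin n, ∏ j ∈ Finset.univ.filter (fun j => i < j), (r i - r j) ^ 2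
        = (alg f.leadingCoeff ^ (n - 1)) ^ 2 *
          (∏ i : Fin n, ∏ j ∈ Finset.Ioi i, (r j - r i)) ^ 2 := by
          rw [← pow_mul]
          congr 1
          · congr 1
            omega
          · rw [← Finset.prod_pow]
            exact Finset.prod_congr rfl fun i _ => h1 i
      _ = δ * δ := by
          rw [hδdef, hD, Matrix.det_vandermonde]
          ring
  have hψD : ψ D = ((Equiv.Perm.sign σ : ℤ) : AlgebraicClosure k) * D := by
    have h1 : ψ D = ((Matrix.vandermonde r).map ψ).det := RingHom.map_det ψ _
    have h2 : (Matrix.vandermonde r).map ψ = (Matrix.vandermonde r).submatrix σ id := by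
      ext i j
      simp only [Matrix.map_apply, Matrix.vandermonde_apply, Matrix.submatrix_apply, id]
      rw [map_pow, hσ i]
    rw [h1, h2, Matrix.det_permute, hD]
  have hcast : ((Equiv.Perm.sign σ : ℤ) : AlgebraicClosure k)
      = (-1 : AlgebraicClosure k) ^ (n - ν) := by
    rw [hsign]
    push_cast
    ring
  have hψδ : ψ δ = (-1 : AlgebraicClosure k) ^ (n - ν) * δ := by
    rw [hδdef, map_mul, map_pow, hψalg, hψD, hcast]
    ring
  -- conclusion
  have hchar2 : ((-1 : AlgebraicClosure k)) ≠ 1 := by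
    intro h1
    have h2 : (2 : AlgebraicClosure k) = 0 := by linear_combination - h1
    have h3 : (p : ℕ) ∣ 2 := by
      have := (CharP.cast_eq_zero_iff (AlgebraicClosure k) p 2).mp (by exact_mod_cast h2)
      exact this
    have hp2 : p = 2 := (Nat.prime_dvd_prime_iff_eq Fact.out Nat.prime_two).mp h3
    rw [hp2] at hp
    exact (by norm_num : ¬ Odd 2) hp
  constructor
  · rintro ⟨e, he⟩
    have h1 : (alg e - δ) * (alg e + δ) = 0 := by
      have h2 : alg e * alg e = δ * δ := by
        rw [← map_mul, ← he, hδ2]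
      ring_nf
      linear_combination h2
    have h2 : ψ δ = δ := by
      rcases mul_eq_zero.mp h1 with h | h
      · have h3 : δ = alg e := (sub_eq_zero.mp h).symm
        rw [h3, hψalg]
      · have h3 : δ = - alg e := by linear_combination h
        rw [h3, map_neg, hψalg]
    rw [hψδ] at h2
    have h3 : ((-1 : AlgebraicClosure k)) ^ (n - ν) = 1 :=
      mul_right_cancel₀ hδne (by rw [h2, one_mul])
    by_contra hodd
    rw [Nat.not_even_iff_odd] at hodd
    rw [hodd.neg_one_pow] at h3
    exact hchar2 (by linear_combination h3)
  · intro heven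
    rw [heven.neg_one_pow, one_mul] at hψδ
    rw [hψ] at hψδ
    obtain ⟨e, he⟩ := aux_fixed k (AlgebraicClosure k) δ hψδ
    refine ⟨e, ?_⟩
    apply hinj
    rw [map_mul, he, hδ2]
end

section
/- Let K be a finite extension of ℚ_p with ramification index e, and suppose K^× contains an element ζ of order p^n (n ≥ 1). Then ζ ∈ U_a but ζ ∉ U_{a+1}, where a = e/(p^{n-1}(p-1)) and U_m = 1 + p_K^m. -/
open IsDiscreteValuationRing IsLocalRing

variable {O : Type} [CommRing O] [IsDomain O] [IsDiscreteValuationRing O]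

private lemma mem_pow_iff' (z : O) (k : ℕ) :
    z ∈ IsLocalRing.maximalIdeal O ^ k ↔ (k : ℕ∞) ≤ addVal O z := by
  obtain ⟨ϖ, hϖ⟩ := exists_irreducible O
  rw [hϖ.maximalIdeal_eq, Ideal.span_singleton_pow, Ideal.mem_span_singleton,
    ← addVal_le_iff_dvd, hϖ.addVal_pow]

private lemma addVal_neg' (y : O) : addVal O (-y) = addVal O y := by
  obtain ⟨ϖ, hϖ⟩ := exists_irreducible O
  have h1 : addVal O ((((-1 : Oˣ)) : O)) = ((0 : ℕ) : ℕ∞) :=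
    addVal_def _ (-1 : Oˣ) hϖ 0 (by simp)
  have : -y = (((-1 : Oˣ)) : O) * y := by simp
  rw [this, addVal_mul, h1]
  simp

private lemma addVal_add_left' {x y : O} (h : addVal O x < addVal O y) :
    addVal O (x + y) = addVal O x := by
  refine le_antisymm ?_ (le_trans (le_min le_rfl h.le) addVal_add)
  by_contra hc
  push_neg at hc
  have h2 : min (addVal O (x + y)) (addVal O (-y)) ≤ addVal O ((x + y) + (-y)) := addVal_add
  rw [addVal_neg', add_neg_cancel_right] at h2
  exact absurd h2 (not_le.mpr (lt_min hc h))

private lemma pow_p_eq' (p : ℕ) (hp : p.Prime) (x : O) :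
    ∃ d : O, (1 + x) ^ p = 1 + x ^ p + p * (x * (1 + x * d)) := by
  obtain ⟨q, rfl⟩ : ∃ q, p = q + 2 := ⟨p - 2, by have := hp.two_le; omega⟩
  refine ⟨∑ k ∈ Finset.range q, x ^ k * ((q + 2).choose (k + 1 + 1) / (q + 2) : ℕ), ?_⟩
  rw [add_comm (1 : O) x, add_pow, Finset.sum_range_succ, Finset.sum_range_succ',
    Finset.sum_range_succ']
  have hterm : ∀ k ∈ Finset.range q,
      x ^ (k + 1 + 1) * (1 : O) ^ (q + 2 - (k + 1 + 1)) * ((q + 2).choose (k + 1 + 1) : O)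
        = (((q + 2 : ℕ) : O) * x * x) * (x ^ k * ((q + 2).choose (k + 1 + 1) / (q + 2) : ℕ)) := by
    intro k hk
    have hdvd : (q + 2) ∣ (q + 2).choose (k + 1 + 1) :=
      Nat.Prime.dvd_choose_self hp (by omega) (by simp at hk; omega)
    have hc2 : (((q + 2).choose (k + 1 + 1) : ℕ) : O)
        = ((q + 2 : ℕ) : O) * (((q + 2).choose (k + 1 + 1) / (q + 2) : ℕ) : O) := by
      rw [← Nat.cast_mul, Nat.mul_div_cancel' hdvd]
    rw [one_pow, mul_one, hc2]
    ring
  rw [Finset.sum_congr rfl hterm, ← Finset.mul_sum]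
  simp only [Nat.choose_self, Nat.choose_zero_right, Nat.choose_one_right, one_pow, pow_zero,
    mul_one, Nat.cast_one, zero_add]
  push_cast
  ring

private lemma key' (p : ℕ) (hp : p.Prime) (e : ℕ)
    (he : IsLocalRing.maximalIdeal O ^ e = Ideal.span {(p : O)})
    (hpm : (p : O) ∈ IsLocalRing.maximalIdeal O) :
    ∀ n, 0 < n → ∀ ζ : Oˣ, orderOf ζ = p ^ n →
      ∃ a : ℕ, 0 < a ∧ a * (p ^ (n - 1) * (p - 1)) = e ∧ addVal O ((ζ : O) - 1) = a := by
  -- e ≥ 1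
  have he1 : 1 ≤ e := by
    rcases Nat.eq_zero_or_pos e with rfl | h
    · exfalso
      rw [pow_zero, eq_comm, Ideal.one_eq_top, Ideal.span_singleton_eq_top] at he
      exact (IsLocalRing.mem_maximalIdeal _).mp hpm he
    · exact h
  -- v p = e
  obtain ⟨ϖ, hϖ⟩ := exists_irreducible O
  have hvp : addVal O (p : O) = (e : ℕ∞) := by
    have hsp : Ideal.span {ϖ ^ e} = Ideal.span {(p : O)} := by
      rw [← Ideal.span_singleton_pow, ← hϖ.maximalIdeal_eq, he]
    obtain ⟨u, hu⟩ := Ideal.span_singleton_eq_span_singleton.mp hsp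
    exact addVal_def _ u hϖ e (by rw [← hu]; ring)
  intro n
  induction n with
  | zero => omega
  | succ m IH =>
    intro _ ζ hζ
    set x : O := (ζ : O) - 1 with hxdef
    have h1x : (1 : O) + x = (ζ : O) := by rw [hxdef]; ring
    have hxne : x ≠ 0 := by
      rw [hxdef, sub_ne_zero]
      intro hx1
      have : ζ = 1 := Units.ext (by simpa using hx1)
      rw [this, orderOf_one] at hζ
      have := hp.two_le
      have : p ^ (m + 1) ≠ 1 := Nat.one_lt_pow (by omega) (by omega) |>.ne'
      omega
    obtain ⟨t, ht⟩ : ∃ t : ℕ, addVal O x = (t : ℕ∞) := by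
      have : addVal O x ≠ ⊤ := fun h => hxne (addVal_eq_top_iff.mp h)
      obtain ⟨t, ht⟩ := WithTop.ne_top_iff_exists.mp this
      exact ⟨t, ht.symm⟩
    obtain ⟨d, hd⟩ := pow_p_eq' p hp x
    rw [h1x] at hd
    -- The key decomposition: ζ^p - 1 = x^p + p*(x*u),  u := 1 + x*d
    set u : O := 1 + x * d with hudef
    have hdec : (ζ : O) ^ p - 1 = x ^ p + (p : O) * (x * u) := by rw [hd]; ring
    have hvxp : addVal O (x ^ p) = ((p * t : ℕ) : ℕ∞) := by
      rw [addVal_pow, ht, nsmul_eq_mul, ← Nat.cast_mul]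
    -- facts available once 1 ≤ t
    have haux : 1 ≤ t → addVal O ((p : O) * (x * u)) = ((e + t : ℕ) : ℕ∞) := by
      intro ht1
      have hxm : x ∈ IsLocalRing.maximalIdeal O := by
        have := (mem_pow_iff' x 1).mpr (by rw [ht]; exact_mod_cast ht1)
        rwa [pow_one] at this
      have humem : u ∉ IsLocalRing.maximalIdeal O := by
        intro h
        have hxd : x * d ∈ IsLocalRing.maximalIdeal O := Ideal.mul_mem_right _ _ hxm
        have h1 : (1 : O) ∈ IsLocalRing.maximalIdeal O := by
          have := Ideal.sub_mem _ h hxd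
          simpa [hudef] using this
        exact ((IsLocalRing.mem_maximalIdeal _).mp h1) isUnit_one
      have hvu : addVal O u = 0 := by
        by_contra h0
        apply humem
        have h1 : (1 : ℕ∞) ≤ addVal O u := ENat.one_le_iff_ne_zero.mpr h0
        have := (mem_pow_iff' u 1).mpr (by exact_mod_cast h1)
        rwa [pow_one] at this
      rw [addVal_mul, addVal_mul, hvp, ht, hvu, add_zero, ← Nat.cast_add]
    have hlt0 : t = 0 → addVal O (x ^ p) < addVal O ((p : O) * (x * u)) := by
      intro ht0
      rw [hvxp, ht0, Nat.mul_zero, Nat.cast_zero]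
      calc (0:ℕ∞) < (e:ℕ∞) := by exact_mod_cast he1
        _ ≤ (e:ℕ∞) + addVal O (x * u) := le_self_add
        _ = addVal O ((p:O) * (x * u)) := by rw [addVal_mul (a := (p:O)) (b := x * u), hvp]
    have h3 : p * t = (p - 1) * t + t := by
      conv_lhs => rw [← Nat.succ_pred_eq_of_pos hp.pos]
      rw [Nat.succ_mul, Nat.pred_eq_sub_one]
    rcases Nat.eq_zero_or_pos m with rfl | hm
    · -- base case n = 1
      have hζp1 : (ζ : O) ^ p = 1 := by
        have h1 : ζ ^ p = 1 := by
          have := pow_orderOf_eq_one ζ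
          rwa [hζ, pow_one] at this
        rw [← Units.val_pow_eq_pow_val, h1, Units.val_one]
      have hsum0 : x ^ p + (p:O) * (x * u) = 0 := by rw [← hdec, hζp1, sub_self]
      have ht1 : 1 ≤ t := by
        by_contra h0
        have ht0 : t = 0 := by omega
        have h4 := addVal_add_left' (hlt0 ht0)
        rw [hsum0, addVal_zero, hvxp] at h4
        exact (WithTop.natCast_ne_top _) h4.symm
      have hvpxu := haux ht1
      have hxpv : x ^ p = -((p:O) * (x * u)) := eq_neg_of_add_eq_zero_left hsum0
      have heq : p * t = e + t := by
        have heqv : ((p * t : ℕ) : ℕ∞) = ((e + t : ℕ) : ℕ∞) := by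
          rw [← hvxp, hxpv, addVal_neg', hvpxu]
        exact_mod_cast heqv
      have hkey : (p - 1) * t = e := by
        have h4 : (p - 1) * t + t = e + t := by rw [← h3]; exact heq
        exact Nat.add_right_cancel h4
      refine ⟨t, ht1, ?_, ht⟩
      simpa [Nat.mul_comm] using hkey
    · -- inductive step
      have horder : orderOf (ζ ^ p) = p ^ m := by
        rw [orderOf_pow' ζ hp.ne_zero, hζ, Nat.gcd_eq_right (dvd_pow_self p (Nat.succ_ne_zero m)), pow_succ,
          Nat.mul_div_cancel _ hp.pos]
      obtain ⟨a', ha'pos, ha'e, ha'v⟩ := IH hm (ζ ^ p) horder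
      have ha'v' : addVal O (x ^ p + (p:O) * (x * u)) = (a' : ℕ∞) := by
        rw [← hdec]
        rwa [Units.val_pow_eq_pow_val] at ha'v
      have ht1 : 1 ≤ t := by
        by_contra h0
        have ht0 : t = 0 := by omega
        have h4 := addVal_add_left' (hlt0 ht0)
        rw [ha'v', hvxp, ht0, Nat.mul_zero] at h4
        have : a' = 0 := by exact_mod_cast h4
        omega
      have hvpxu := haux ht1
      have hmm : m - 1 + 1 = m := by omega
      rcases lt_trichotomy (p * t) (e + t) with hc | hc | hc
      · -- v(y) = p*t, so a' = p*t and a = t works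
        have hv : addVal O (x ^ p + (p:O) * (x * u)) = ((p * t : ℕ) : ℕ∞) := by
          rw [addVal_add_left', hvxp]
          rw [hvxp, hvpxu]
          exact_mod_cast hc
        have ha'pt : a' = p * t := by exact_mod_cast ha'v'.symm.trans hv
        refine ⟨t, ht1, ?_, ht⟩
        have hpm' : p ^ (m + 1 - 1) = p ^ (m - 1) * p := by
          rw [← pow_succ, hmm]
          rfl
        rw [hpm']
        calc t * (p ^ (m - 1) * p * (p - 1)) = (p * t) * (p ^ (m - 1) * (p - 1)) := by ring
          _ = a' * (p ^ (m - 1) * (p - 1)) := by rw [ha'pt]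
          _ = e := ha'e
      · -- p*t = e + t : impossible
        exfalso
        have hge : p * t ≤ a' := by
          have h5 : ((p * t : ℕ) : ℕ∞) ≤ (a' : ℕ∞) := by
            rw [← ha'v']
            refine le_trans ?_ addVal_add
            have h6 : ((e + t : ℕ) : ℕ∞) = ((p * t : ℕ) : ℕ∞) := by exact_mod_cast hc.symm
            rw [hvxp, hvpxu, h6, min_self]
          exact_mod_cast h5
        have hkey : (p - 1) * t = e := by
          have h4 : (p - 1) * t + t = e + t := by rw [← h3]; exact hc
          exact Nat.add_right_cancel h4
        have htval : t = a' * p ^ (m - 1) := by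
          refine Nat.eq_of_mul_eq_mul_right (show 0 < p - 1 by have := hp.two_le; omega) ?_
          rw [mul_comm t, hkey, ← ha'e]
          ring
        have hpm2 : 2 ≤ p ^ m := by
          calc 2 ≤ p := hp.two_le
            _ = p ^ 1 := (pow_one p).symm
            _ ≤ p ^ m := Nat.pow_le_pow_right hp.pos hm
        have hpowm : p ^ m = p ^ (m - 1) * p := by rw [← pow_succ, hmm]
        have h7 : p * t = a' * p ^ m := by
          rw [htval, hpowm]
          ring
        have h8 : a' * 2 ≤ a' * p ^ m := Nat.mul_le_mul_left a' hpm2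
        have h9 : a' * 2 ≤ a' := by
          calc a' * 2 ≤ a' * p ^ m := h8
            _ = p * t := h7.symm
            _ ≤ a' := hge
        omega
      · -- p*t > e + t : impossible
        exfalso
        have hv : addVal O (x ^ p + (p:O) * (x * u)) = ((e + t : ℕ) : ℕ∞) := by
          rw [add_comm (x ^ p), addVal_add_left', hvpxu]
          rw [hvxp, hvpxu]
          exact_mod_cast hc
        have ha2 : a' = e + t := by exact_mod_cast ha'v'.symm.trans hv
        have h5 : e < (p - 1) * t := by
          have h4 : e + t < (p - 1) * t + t := by rw [← h3]; exact hc
          omega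
        have h6 : a' * p ^ (m - 1) * (p - 1) < t * (p - 1) := by
          rw [mul_assoc, ha'e, mul_comm t]
          exact h5
        have h7 : a' * p ^ (m - 1) < t :=
          lt_of_mul_lt_mul_right h6 (Nat.zero_le _)
        have h8 : a' ≤ a' * p ^ (m - 1) := Nat.le_mul_of_pos_right _ (Nat.pow_pos hp.pos)
        omega


/-- Let `O` be the ring of integers of a finite extension of `ℚ_p` with ramification
index `e` (`m^e = (p)`). If `ζ` is a unit of exact order `p^n` (`n ≥ 1`), then, with
`a = e / (p^{n-1}(p-1))` (necessarily a positive integer), `ζ ∈ U_a = 1 + m^a` but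
`ζ ∉ U_{a+1}`. -/
theorem stmt7 (p : ℕ) [Fact p.Prime]
    (O : Type) [CommRing O] [IsDomain O] [IsDiscreteValuationRing O]
    [IsAdicComplete (IsLocalRing.maximalIdeal O) O] [CharZero O]
    [CharP (IsLocalRing.ResidueField O) p] [Finite (IsLocalRing.ResidueField O)]
    (e : ℕ) (he : IsLocalRing.maximalIdeal O ^ e = Ideal.span {(p : O)})
    (n : ℕ) (hn : 0 < n) (ζ : Oˣ) (hζ : orderOf ζ = p ^ n) :
    ∃ a : ℕ, 0 < a ∧ a * (p ^ (n - 1) * (p - 1)) = e ∧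
      (ζ : O) - 1 ∈ IsLocalRing.maximalIdeal O ^ a ∧
      (ζ : O) - 1 ∉ IsLocalRing.maximalIdeal O ^ (a + 1) := by
  have hp := Fact.out (p := p.Prime)
  have hpm : (p : O) ∈ IsLocalRing.maximalIdeal O := by
    have h0 : ((p : ℕ) : IsLocalRing.ResidueField O) = 0 := CharP.cast_eq_zero _ p
    rw [IsLocalRing.mem_maximalIdeal]
    intro hu
    have h1 := hu.map (IsLocalRing.residue O)
    rw [map_natCast, h0] at h1
    exact not_isUnit_zero h1
  obtain ⟨a, ha0, hae, hav⟩ := key' p hp e he hpm n hn ζ hζ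
  refine ⟨a, ha0, hae, (mem_pow_iff' _ a).mpr (by rw [hav]), ?_⟩
  intro h
  rw [mem_pow_iff', hav, Nat.cast_le] at h
  omega
end

section
/- Let K be a finite extension of ℚ_p with ramification index e and e₁ = e/(p-1). For every integer n > e₁, the p-th power map ( )^p : U_n → U_{n+e} is a bijection, where U_m = 1 + p_K^m. -/
open Finset

/-- Binomial expansion of `(u+δ)^p`, isolating the top two terms. -/
private lemma expand_pow_aux {O : Type} [CommRing O] (p : ℕ) (hp : 2 ≤ p) (u δ : O) :
    (u + δ) ^ p =
      (∑ j ∈ range (p - 1), u ^ j * δ ^ (p - j) * (p.choose j : O))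
        + (p : O) * u ^ (p - 1) * δ + u ^ p := by
  rw [add_pow]
  rw [show p + 1 = (p - 1) + 1 + 1 from by omega]
  rw [Finset.sum_range_succ, Finset.sum_range_succ]
  have h1 : p - 1 + 1 = p := by omega
  have h3 : p.choose (p - 1) = p := by
    have := Nat.choose_symm (by omega : 1 ≤ p) (n := p)
    rw [this, Nat.choose_one_right]
  rw [h1, show p - (p - 1) = 1 from by omega, h3]
  simp [Nat.choose_self]
  ring

/-- Factorization `(1+a)^p = 1 + a * ∑_{k<p} a^k * C(p,k+1)`. -/
private lemma fact_pow_aux {O : Type} [CommRing O] (p : ℕ) (a : O) :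
    (1 + a) ^ p = 1 + a * (∑ k ∈ range p, a ^ k * (p.choose (k + 1) : O)) := by
  rw [add_comm, add_pow]
  rw [Finset.sum_range_succ' (fun k => a ^ k * (1 : O) ^ (p - k) * (p.choose k : O)) p]
  simp only [one_pow, pow_zero, one_mul, Nat.choose_zero_right, Nat.cast_one, mul_one]
  rw [Finset.mul_sum, add_comm]
  congr 1
  refine Finset.sum_congr rfl fun k _ => by ring

/-- Let `O` be the ring of integers of a finite extension of `ℚ_p` with ramification
index `e` (`m^e = (p)`) and `e₁ = e/(p-1)`. For every integer `n > e₁` (i.e.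
`(p-1)·n > e`), the `p`-th power map is a bijection from `U_n = 1 + m^n` onto
`U_{n+e} = 1 + m^{n+e}`. -/
theorem stmt9 (p : ℕ) [Fact p.Prime]
    (O : Type) [CommRing O] [IsDomain O] [IsDiscreteValuationRing O]
    [IsAdicComplete (IsLocalRing.maximalIdeal O) O] [CharZero O]
    [CharP (IsLocalRing.ResidueField O) p] [Finite (IsLocalRing.ResidueField O)]
    (e : ℕ) (he : IsLocalRing.maximalIdeal O ^ e = Ideal.span {(p : O)})
    (n : ℕ) (hn : e < (p - 1) * n) :
    Set.BijOn (fun x : Oˣ => x ^ p)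
      {x : Oˣ | (x : O) - 1 ∈ IsLocalRing.maximalIdeal O ^ n}
      {y : Oˣ | (y : O) - 1 ∈ IsLocalRing.maximalIdeal O ^ (n + e)} := by
  have hp : p.Prime := Fact.out
  have hp2 : 2 ≤ p := hp.two_le
  set M := IsLocalRing.maximalIdeal O with hM
  have hn1 : 1 ≤ n := by
    rcases n with _ | n
    · simp at hn
    · omega
  have hpn : e + 1 ≤ (p - 1) * n := hn
  have memtr : ∀ {α β : ℕ} {x : O}, β ≤ α → x ∈ M ^ α → x ∈ M ^ β :=
    fun h hx => Ideal.pow_le_pow_right h hx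
  have hpmem : (p : O) ∈ M ^ e := by
    rw [he]; exact Ideal.mem_span_singleton_self _
  have hpnot : (p : O) ∉ M ^ (e + 1) := by
    intro hmem
    obtain ⟨ϖ, hϖ⟩ := IsDiscreteValuationRing.exists_irreducible O
    have hMϖ : M = Ideal.span {ϖ} := hϖ.maximalIdeal_eq
    have h1 : (p : O) ∈ Ideal.span {ϖ ^ (e + 1)} := by
      rw [← Ideal.span_singleton_pow, ← hMϖ]; exact hmem
    have h2 : Associated (ϖ ^ e) (p : O) := by
      rw [← Ideal.span_singleton_eq_span_singleton, ← Ideal.span_singleton_pow, ← hMϖ, he]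
    obtain ⟨u, hu⟩ := h2
    have h3 : ϖ ^ (e + 1) ∣ ϖ ^ e := by
      obtain ⟨t, ht⟩ := Ideal.mem_span_singleton.mp h1
      refine ⟨t * (u⁻¹ : Oˣ), ?_⟩
      have hpe : ϖ ^ e = (p : O) * (u⁻¹ : Oˣ) := by
        rw [← hu, mul_assoc]; simp
      rw [hpe, ht]; ring
    have := (pow_dvd_pow_iff hϖ.ne_zero hϖ.not_isUnit).mp h3
    omega
  -- a^k ∈ M^n for a ∈ M^n, k ≥ 1
  have hpow_mem : ∀ {a : O} {s k : ℕ}, a ∈ M ^ s → 1 ≤ k → a ^ k ∈ M ^ s := by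
    intro a s k ha hk
    rcases Nat.exists_eq_add_of_le hk with ⟨j, rfl⟩
    rw [add_comm, pow_add, pow_one]
    exact Ideal.mul_mem_left _ _ ha
  -- mapsTo: for a ∈ M^n, (1+a)^p - 1 ∈ M^(n+e)
  have hmaps_core : ∀ a : O, a ∈ M ^ n → (1 + a) ^ p - 1 ∈ M ^ (n + e) := by
    intro a ha
    rw [fact_pow_aux, add_sub_cancel_left, Finset.mul_sum]
    refine Ideal.sum_mem _ fun k hk => ?_
    rw [Finset.mem_range] at hk
    by_cases hkp : k + 1 = p
    · -- term: a * (a^k * C(p,p)) = a^p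
      have h1 : a * (a ^ k * (p.choose (k + 1) : O)) = a ^ p := by
        rw [hkp, Nat.choose_self]; push_cast; rw [← hkp]; ring
      rw [h1]
      have h2 : a ^ p ∈ M ^ (n * p) := by
        rw [pow_mul]; exact Ideal.pow_mem_pow ha p
      refine memtr ?_ h2
      have h3 : n + (p - 1) * n = n * p := by
        rw [Nat.mul_comm (p - 1) n, add_comm, ← Nat.mul_succ]; congr 1; omega
      omega
    · obtain ⟨t, ht⟩ := hp.dvd_choose_self (Nat.succ_ne_zero k) (by omega)
      have h1 : a * (a ^ k * (p.choose (k + 1) : O)) = (a ^ (k + 1) * (p : O)) * (t : O) := by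
        rw [ht]; push_cast; ring
      rw [h1]
      refine Ideal.mul_mem_right _ _ ?_
      have := Ideal.mul_mem_mul (hpow_mem (k := k + 1) ha (Nat.succ_le_succ (Nat.zero_le k))) hpmem
      rwa [← pow_add] at this
  -- injectivity core: a ∈ M^n and (1+a)^p = 1 implies a = 0
  have hinj_core : ∀ a : O, a ∈ M ^ n → (1 + a) ^ p = 1 → a = 0 := by
    intro a ha h1
    set S := ∑ k ∈ range p, a ^ k * (p.choose (k + 1) : O) with hS
    have haS : a * S = 0 := by
      have h2 : (1 : O) + a * S = 1 := by rw [hS, ← fact_pow_aux, h1]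
      linear_combination h2
    rcases mul_eq_zero.mp haS with h | h
    · exact h
    · exfalso
      have hps : S = (∑ k ∈ range (p - 1), a ^ (k + 1) * (p.choose (k + 1 + 1) : O)) + (p : O) := by
        have h3 := Finset.sum_range_succ' (fun k => a ^ k * (p.choose (k + 1) : O)) (p - 1)
        rw [show p - 1 + 1 = p from by omega] at h3
        rw [hS, h3]
        norm_num
      have htail : (∑ k ∈ range (p - 1), a ^ (k + 1) * (p.choose (k + 1 + 1) : O)) ∈ M ^ (e + 1) := by
        refine Ideal.sum_mem _ fun k hk => ?_
        rw [Finset.mem_range] at hk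
        by_cases hkp : k + 2 = p
        · have hq : (p.choose (k + 1 + 1) : O) = 1 := by
            rw [show k + 1 + 1 = p from by omega, Nat.choose_self]; norm_num
          rw [hq, mul_one]
          have h4 : a ^ (k + 1) ∈ M ^ (n * (k + 1)) := by
            rw [pow_mul]; exact Ideal.pow_mem_pow ha _
          refine memtr ?_ h4
          have h5 : n * (k + 1) = (p - 1) * n := by rw [Nat.mul_comm]; congr 1; omega
          omega
        · obtain ⟨t, ht⟩ := hp.dvd_choose_self (by omega : k + 1 + 1 ≠ 0) (by omega)
          have h6 : a ^ (k + 1) * (p.choose (k + 1 + 1) : O)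
              = (a ^ (k + 1) * (p : O)) * (t : O) := by rw [ht]; push_cast; ring
          rw [h6]
          refine Ideal.mul_mem_right _ _ ?_
          have h7 := Ideal.mul_mem_mul
            (memtr hn1 (hpow_mem (k := k + 1) ha (Nat.succ_le_succ (Nat.zero_le k)))) hpmem
          rw [← pow_add, Nat.add_comm 1 e] at h7
          exact h7
      apply hpnot
      have h8 : (p : O) = -(∑ k ∈ range (p - 1), a ^ (k + 1) * (p.choose (k + 1 + 1) : O)) := by
        have h9 := hps
        rw [h] at h9
        linear_combination -h9
      rw [h8]
      exact neg_mem htail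
  refine ⟨?_, ?_, ?_⟩
  · -- MapsTo
    intro x hx
    simp only [Set.mem_setOf_eq] at hx ⊢
    have hx1 : (x : O) = 1 + ((x : O) - 1) := by ring
    rw [Units.val_pow_eq_pow_val, hx1]
    exact hmaps_core _ hx
  · -- InjOn
    intro x hx y hy hxy
    simp only [Set.mem_setOf_eq] at hx hy
    have hxy' : x ^ p = y ^ p := hxy
    have hyy : (y : O) * ((y⁻¹ : Oˣ) : O) = 1 := Units.mul_inv y
    have hu : ((x * y⁻¹ : Oˣ) : O) - 1 ∈ M ^ n := by
      have h7 : ((x * y⁻¹ : Oˣ) : O) - 1 = ((x : O) - (y : O)) * ((y⁻¹ : Oˣ) : O) := by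
        push_cast
        linear_combination hyy
      have h8 : (x : O) - (y : O) ∈ M ^ n := by
        have h := sub_mem hx hy
        rwa [show ((x:O) - 1) - ((y:O) - 1) = (x:O) - (y:O) from by ring] at h
      rw [h7]
      exact Ideal.mul_mem_right _ _ h8
    have h10 : (x * y⁻¹) ^ p = 1 := by
      rw [mul_pow, inv_pow]; exact mul_inv_eq_one.mpr hxy'
    have h11 : (1 + (((x * y⁻¹ : Oˣ) : O) - 1)) ^ p = 1 := by
      rw [show (1 : O) + (((x * y⁻¹ : Oˣ) : O) - 1) = ((x * y⁻¹ : Oˣ) : O) from by ring,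
        ← Units.val_pow_eq_pow_val, h10, Units.val_one]
    have h12 := hinj_core _ hu h11
    rw [sub_eq_zero] at h12
    have h13 : (x * y⁻¹ : Oˣ) = 1 := Units.ext (by rw [h12, Units.val_one])
    exact mul_inv_eq_one.mp h13
  · -- SurjOn
    intro y hy
    simp only [Set.mem_setOf_eq] at hy
    set b : O := (y : O) - 1 with hb
    have step : ∀ (k : ℕ) (a : O), ∃ a' : O,
        (a ∈ M ^ n ∧ (1 + a) ^ p - (1 + b) ∈ M ^ (n + e + k)) →
        ((a' - a ∈ M ^ (n + k)) ∧ a' ∈ M ^ n ∧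
          (1 + a') ^ p - (1 + b) ∈ M ^ (n + e + (k + 1))) := by
      intro k a
      by_cases H : a ∈ M ^ n ∧ (1 + a) ^ p - (1 + b) ∈ M ^ (n + e + k)
      · obtain ⟨ha, hc⟩ := H
        have hsplit : (1 + a) ^ p - (1 + b) ∈ Ideal.span {(p : O)} * M ^ (n + k) := by
          rw [← he, ← pow_add, show e + (n + k) = n + e + k from by omega]
          exact hc
        obtain ⟨d0, hd0, hd0eq⟩ := Ideal.mem_span_singleton_mul.mp hsplit
        have hau : IsUnit (1 + a) := by
          by_contra hcon
          have h1 : 1 + a ∈ M := (IsLocalRing.mem_maximalIdeal _).mpr (mem_nonunits_iff.mpr hcon)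
          have h2 : a ∈ M := by have := memtr hn1 ha; rwa [pow_one] at this
          have h3 : (1 : O) ∈ M := by have := sub_mem h1 h2; simpa using this
          exact (IsLocalRing.maximalIdeal.isMaximal O).ne_top
            (Ideal.eq_top_of_isUnit_mem _ h3 isUnit_one)
        obtain ⟨w, hw⟩ := hau
        set v : O := ((w⁻¹ : Oˣ) : O) ^ (p - 1) with hv
        set d : O := -(d0 * v) with hd
        have hdmem : d ∈ M ^ (n + k) := by
          rw [hd]; exact neg_mem (Ideal.mul_mem_right _ _ hd0)
        refine ⟨a + d, fun _ => ⟨by simpa using hdmem, ?_, ?_⟩⟩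
        · exact add_mem ha (memtr (by omega) hdmem)
        · have hcan : (1 + a) ^ (p - 1) * v = 1 := by
            rw [hv, ← hw, ← mul_pow, Units.mul_inv, one_pow]
          have hkey : (p : O) * (1 + a) ^ (p - 1) * d = -((1 + a) ^ p - (1 + b)) := by
            calc (p : O) * (1 + a) ^ (p - 1) * d
                = -((p : O) * d0) * ((1 + a) ^ (p - 1) * v) := by rw [hd]; ring
              _ = -((p : O) * d0) := by rw [hcan, mul_one]
              _ = -((1 + a) ^ p - (1 + b)) := by rw [hd0eq]
          have herr : (1 + (a + d)) ^ p - (1 + b)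
              = ∑ j ∈ range (p - 1), (1 + a) ^ j * d ^ (p - j) * (p.choose j : O) := by
            have h1 := expand_pow_aux p hp2 (1 + a) d
            rw [show (1 : O) + (a + d) = (1 + a) + d from by ring, h1, hkey]
            ring
          rw [herr]
          refine Ideal.sum_mem _ fun j hj => ?_
          rw [Finset.mem_range] at hj
          rcases Nat.eq_zero_or_pos j with hj0 | hj1
          · subst hj0
            simp only [pow_zero, one_mul, Nat.choose_zero_right, Nat.cast_one, mul_one,
              Nat.sub_zero]
            have h2 : d ^ p ∈ M ^ ((n + k) * p) := by
              rw [pow_mul]; exact Ideal.pow_mem_pow hdmem p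
            refine memtr ?_ h2
            have h3 : n * (p - 1) ≤ (n + k) * (p - 1) := Nat.mul_le_mul_right _ (by omega)
            have h4 : (n + k) * (p - 1) + (n + k) = (n + k) * p := by
              rw [← Nat.mul_succ]; congr 1; omega
            have h5 : n * (p - 1) = (p - 1) * n := Nat.mul_comm _ _
            omega
          · obtain ⟨t, ht⟩ := hp.dvd_choose_self (by omega : j ≠ 0) (by omega)
            obtain ⟨q, hq⟩ : ∃ q, p - j = q + 2 := ⟨p - j - 2, by omega⟩
            have h6 : (1 + a) ^ j * d ^ (p - j) * (p.choose j : O)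
                = (d ^ 2 * (p : O)) * ((1 + a) ^ j * d ^ q * (t : O)) := by
              rw [ht, hq]; push_cast
              ring
            rw [h6]
            refine Ideal.mul_mem_right _ _ ?_
            have h7 : d ^ 2 ∈ M ^ ((n + k) * 2) := by
              rw [pow_mul]; exact Ideal.pow_mem_pow hdmem 2
            have h8 := Ideal.mul_mem_mul h7 hpmem
            rw [← pow_add] at h8
            exact memtr (by omega) h8
      · exact ⟨a, fun h => absurd h H⟩
    choose g hg using step
    set f : ℕ → O := fun k => Nat.rec (0 : O) (fun k a => g k a) k with hf
    have hfs : ∀ k, f (k + 1) = g k (f k) := fun k => rfl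
    have inv : ∀ k, f k ∈ M ^ n ∧ (1 + f k) ^ p - (1 + b) ∈ M ^ (n + e + k) := by
      intro k
      induction k with
      | zero =>
        refine ⟨zero_mem _, ?_⟩
        show (1 + (0 : O)) ^ p - (1 + b) ∈ M ^ (n + e + 0)
        rw [show ((1 : O) + 0) ^ p - (1 + b) = -b from by ring]
        exact neg_mem hy
      | succ k ih =>
        have h := hg k (f k) ih
        rw [← hfs k] at h
        exact ⟨h.2.1, h.2.2⟩
    have hdiff : ∀ k, f (k + 1) - f k ∈ M ^ (n + k) := by
      intro k
      have h := hg k (f k) (inv k)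
      rw [← hfs k] at h
      exact h.1
    have tele : ∀ m j : ℕ, f m - f (m + j) ∈ M ^ m := by
      intro m j
      induction j with
      | zero => simpa using zero_mem (M ^ m)
      | succ j ih =>
        have h1 : f m - f (m + (j + 1))
            = (f m - f (m + j)) - (f (m + j + 1) - f (m + j)) := by
          rw [show m + (j + 1) = m + j + 1 from rfl]; ring
        rw [h1]
        exact sub_mem ih (memtr (by omega) (hdiff (m + j)))
    have hcau : ∀ {m l : ℕ}, m ≤ l → f m ≡ f l [SMOD (M ^ m • ⊤ : Submodule O O)] := by
      intro m l hml
      rw [SModEq.sub_mem, smul_eq_mul, Ideal.mul_top]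
      obtain ⟨j, rfl⟩ := Nat.exists_eq_add_of_le hml
      exact tele m j
    obtain ⟨L, hL⟩ := IsPrecomplete.prec (inferInstance : IsPrecomplete M O) hcau
    have hLk : ∀ k, f k - L ∈ M ^ k := by
      intro k
      have h := hL k
      rwa [SModEq.sub_mem, smul_eq_mul, Ideal.mul_top] at h
    have hLn : L ∈ M ^ n := by
      have h1 := (inv n).1
      have h2 := hLk n
      rw [show L = f n - (f n - L) from by ring]
      exact sub_mem h1 h2
    have hzero : (1 + L) ^ p - (1 + b) = 0 := by
      refine IsHausdorff.haus (inferInstance : IsHausdorff M O) _ fun j => ?_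
      rw [SModEq.zero, smul_eq_mul, Ideal.mul_top]
      have h1 : (1 + f j) ^ p - (1 + b) ∈ M ^ j := memtr (by omega) (inv j).2
      have h2 : (1 + L) ^ p - (1 + f j) ^ p ∈ M ^ j := by
        obtain ⟨t, ht⟩ := sub_dvd_pow_sub_pow (1 + L) (1 + f j) p
        rw [ht, show (1 : O) + L - (1 + f j) = -(f j - L) from by ring]
        exact Ideal.mul_mem_right _ _ (neg_mem (hLk j))
      rw [show (1 + L) ^ p - (1 + b)
          = ((1 + L) ^ p - (1 + f j) ^ p) + ((1 + f j) ^ p - (1 + b)) from by ring]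
      exact add_mem h2 h1
    have hLu : IsUnit (1 + L) := by
      by_contra hcon
      have h1 : 1 + L ∈ M := (IsLocalRing.mem_maximalIdeal _).mpr (mem_nonunits_iff.mpr hcon)
      have h2 : L ∈ M := by have := memtr hn1 hLn; rwa [pow_one] at this
      have h3 : (1 : O) ∈ M := by have := sub_mem h1 h2; simpa using this
      exact (IsLocalRing.maximalIdeal.isMaximal O).ne_top
        (Ideal.eq_top_of_isUnit_mem _ h3 isUnit_one)
    obtain ⟨x, hx⟩ := hLu
    refine ⟨x, ?_, ?_⟩
    · show (x : O) - 1 ∈ M ^ n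
      rw [hx, show (1 : O) + L - 1 = L from by ring]
      exact hLn
    · show x ^ p = y
      refine Units.ext ?_
      rw [Units.val_pow_eq_pow_val, hx]
      have h1 : (1 + L) ^ p = 1 + b := by linear_combination hzero
      rw [h1, hb]
      ring
end

section
/- Let K = ℚ₂(√3) with uniformizer π = √3 - 1. Then -1 is a square modulo π^4 in the ring of integers of K; consequently K(√-1) is the unramified quadratic extension of K. -/
private lemma field_two {k : Type*} [Field k] (h : Nat.card k = 2) (y : k) : y = 0 ∨ y = 1 := by
  by_contra hy
  push_neg at hy
  have hfin : Finite k := Nat.finite_of_card_ne_zero (by omega)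
  have := Fintype.ofFinite k
  rw [Nat.card_eq_fintype_card] at h
  have hinj : Function.Injective (![0, 1, y] : Fin 3 → k) := by
    intro a b hab
    fin_cases a <;> fin_cases b <;> simp_all
  have := Fintype.card_le_of_injective _ hinj
  simp [h] at this

private lemma unit_add_mem {R : Type*} [CommRing R] [IsLocalRing R] {u x : R}
    (hu : IsUnit u) (hx : x ∈ IsLocalRing.maximalIdeal R) : IsUnit (u + x) := by
  by_contra h
  have hmem : u + x ∈ IsLocalRing.maximalIdeal R := (IsLocalRing.mem_maximalIdeal _).mpr h
  have hu' : u ∈ IsLocalRing.maximalIdeal R := by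
    have := Ideal.sub_mem _ hmem hx; simpa using this
  exact (IsLocalRing.mem_maximalIdeal _).mp hu' hu

private lemma pow_eq_pow_aux {R : Type*} [CommRing R] [IsDomain R] {ϖ a b : R}
    (hϖ : Irreducible ϖ) (ha : IsUnit a) {m n : ℕ} (hmn : m ≤ n)
    (h : a * ϖ ^ m = b * ϖ ^ n) : m = n := by
  obtain ⟨k, rfl⟩ := Nat.exists_eq_add_of_le hmn
  have h' : a = b * ϖ ^ k := by
    apply mul_right_cancel₀ (pow_ne_zero m hϖ.ne_zero)
    rw [h, pow_add]; ring
  rcases Nat.eq_zero_or_pos k with hk | hk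
  · omega
  · exfalso
    have hdvd : ϖ ∣ a := h' ▸ (dvd_pow_self ϖ (by omega)).mul_left b
    exact hϖ.not_isUnit (isUnit_of_dvd_unit hdvd ha)

private lemma pow_eq_pow {R : Type*} [CommRing R] [IsDomain R] {ϖ a b : R}
    (hϖ : Irreducible ϖ) (ha : IsUnit a) (hb : IsUnit b) {m n : ℕ}
    (h : a * ϖ ^ m = b * ϖ ^ n) : m = n := by
  rcases le_total m n with hmn | hnm
  · exact pow_eq_pow_aux hϖ ha hmn h
  · exact (pow_eq_pow_aux hϖ hb hnm h.symm).symm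

private lemma eq_zero_of_forall_dvd {R : Type*} [CommRing R] [IsDomain R]
    [IsDiscreteValuationRing R] {π a : R} (hπ : Irreducible π)
    (h : ∀ n : ℕ, π ^ n ∣ a) : a = 0 := by
  by_contra ha
  obtain ⟨n, u, hu⟩ := IsDiscreteValuationRing.eq_unit_mul_pow_irreducible ha hπ
  obtain ⟨z, hz⟩ := h (n + 1)
  rw [hu] at hz
  have hdvd : (u : R) = π * z := by
    apply mul_right_cancel₀ (pow_ne_zero n hπ.ne_zero)
    rw [hz, pow_add]; ring
  exact hπ.not_isUnit (isUnit_of_dvd_unit ⟨z, hdvd⟩ u.isUnit)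

/-- Let `O` be the ring of integers of `K = ℚ₂(√3)`: a complete discrete valuation ring
of characteristic zero with residue field of cardinality `2`, containing `s = √3`
(`s² = 3`) with `π = s - 1` a uniformiser and `m² = (2)` (so `v(2) = 2`).  Then `-1` is
a square modulo `π⁴` (explicitly `-1 ≡ (1+π)² mod π⁴`); consequently adjoining `√-1`
yields the unramified quadratic extension of `K`: for any quadratic extension `O_L` of
`O` (a discrete valuation ring, integral over `O`, free of rank `2`) containing an
element `i` with `i² = -1` not coming from `O`, the maximal ideal of `O` generates the
maximal ideal of `O_L`. -/
theorem stmt16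
    (O : Type) [CommRing O] [IsDomain O] [IsDiscreteValuationRing O]
    [IsAdicComplete (IsLocalRing.maximalIdeal O) O] [CharZero O]
    (hcard : Nat.card (IsLocalRing.ResidueField O) = 2)
    (h2 : IsLocalRing.maximalIdeal O ^ 2 = Ideal.span {(2 : O)})
    (s : O) (hs : s ^ 2 = 3) (hπ : Irreducible (s - 1)) :
    (∃ t : O, (1 + (s - 1)) ^ 2 + (s - 1) ^ 4 * t = -1) ∧
    ∀ (OL : Type) [CommRing OL] [IsDomain OL] [IsDiscreteValuationRing OL] [Algebra O OL],
      Algebra.IsIntegral O OL → Nonempty (Module.Basis (Fin 2) O OL) →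
      ∀ i : OL, i ^ 2 = -1 → i ∉ Set.range (algebraMap O OL) →
      Ideal.map (algebraMap O OL) (IsLocalRing.maximalIdeal O) =
        IsLocalRing.maximalIdeal OL := by
  have hident : s ^ 2 + (s - 1) ^ 4 * (-(7 + 4 * s)) = -1 := by
    linear_combination (-4*s^3+9*s^2-8*s+2) * hs
  constructor
  · exact ⟨-(7 + 4 * s), by linear_combination hident⟩
  intro OL _ _ _ _ hint hb i hi2 hirange
  haveI := hint
  obtain ⟨bs⟩ := hb
  set f := algebraMap O OL with hfdef
  -- facts in O
  have hmO : IsLocalRing.maximalIdeal O = Ideal.span {s - 1} :=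
    (IsDiscreteValuationRing.irreducible_iff_uniformizer _).mp hπ
  have hspan2 : Ideal.span {(s - 1) ^ 2} = Ideal.span {(2 : O)} := by
    rw [← Ideal.span_singleton_pow, ← hmO, h2]
  obtain ⟨ε, hε⟩ := Ideal.span_singleton_eq_span_singleton.mp hspan2
  have hmem_iff : ∀ x : O, x ∈ IsLocalRing.maximalIdeal O ↔ (s - 1) ∣ x := by
    intro x; rw [hmO, Ideal.mem_span_singleton]
  have hK2 : ∀ x : O, (s - 1) ∣ x ∨ (s - 1) ∣ (x - 1) := by
    intro x
    rcases field_two hcard (IsLocalRing.residue O x) with h | h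
    · left
      rw [← hmem_iff]
      exact (IsLocalRing.residue_eq_zero_iff x).mp h
    · right
      rw [← hmem_iff, ← IsLocalRing.residue_eq_zero_iff]
      rw [map_sub, map_one, h, sub_self]
  have hπm : s - 1 ∈ IsLocalRing.maximalIdeal O :=
    (IsLocalRing.mem_maximalIdeal _).mpr hπ.not_isUnit
  have hsu : IsUnit s := by
    by_contra h
    have hsm : s ∈ IsLocalRing.maximalIdeal O := (IsLocalRing.mem_maximalIdeal _).mpr h
    have h1 : (1 : O) ∈ IsLocalRing.maximalIdeal O := by
      have he : (1 : O) = s * s - (s - 1) * ((s - 1) * ↑ε) := by linear_combination hε - hs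
      rw [he]
      exact Ideal.sub_mem _ (Ideal.mul_mem_right _ _ hsm) (Ideal.mul_mem_right _ _ hπm)
    exact (IsLocalRing.maximalIdeal.isMaximal O).ne_top ((Ideal.eq_top_iff_one _).mpr h1)
  have htu : IsUnit (-(7 + 4 * s)) :=
    IsUnit.of_mul_eq_one (4 * s - 7) (by linear_combination (-16) * hs)
  have hεdvd1 : (s - 1) ∣ (↑ε - 1 : O) := by
    rcases hK2 ↑ε with h | h
    · exact absurd (isUnit_of_dvd_unit h ε.isUnit) hπ.not_isUnit
    · exact h
  have h2dvd : (s - 1) ∣ (2 : O) := ⟨(s - 1) * ↑ε, by linear_combination (-1 : O) * hε⟩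
  -- into OL
  have hinj : Function.Injective f := bs.algebraMap_injective
  have hcomap : Ideal.comap f (IsLocalRing.maximalIdeal OL) = IsLocalRing.maximalIdeal O :=
    IsLocalRing.eq_maximalIdeal
      (Ideal.isMaximal_comap_of_isIntegral_of_isMaximal (IsLocalRing.maximalIdeal OL))
  have hπ'mem : f (s - 1) ∈ IsLocalRing.maximalIdeal OL := by
    have : s - 1 ∈ Ideal.comap f (IsLocalRing.maximalIdeal OL) := by rw [hcomap]; exact hπm
    exact this
  have hπ'0 : f (s - 1) ≠ 0 := fun h => hπ.ne_zero (hinj (h.trans (map_zero f).symm))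
  have hmap : (f s) ^ 2 + (f (s - 1)) ^ 4 * f (-(7 + 4 * s)) = -1 := by
    rw [← map_pow, ← map_pow, ← map_mul, ← map_add, hident, map_neg, map_one]
  set t' := f (-(7 + 4 * s)) with ht'def
  set j := i - f s with hjdef
  have hjne : j ≠ 0 := by
    intro h
    exact hirange ⟨s, (sub_eq_zero.mp h).symm⟩
  have hj : j ^ 2 + 2 * f s * j = (f (s - 1)) ^ 4 * t' := by
    rw [hjdef]; linear_combination hi2 - hmap
  have h2OL : (2 : OL) = (f (s - 1)) ^ 2 * f ↑ε := by
    calc (2 : OL) = f 2 := (map_ofNat f 2).symm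
    _ = f ((s - 1) ^ 2 * ↑ε) := by rw [hε]
    _ = (f (s - 1)) ^ 2 * f ↑ε := by rw [map_mul, map_pow]
  have hsu' : IsUnit (f s) := hsu.map f
  have htu' : IsUnit t' := htu.map f
  have hεu' : IsUnit (f ↑ε) := ε.isUnit.map f
  obtain ⟨ϖ, hϖ⟩ := IsDiscreteValuationRing.exists_irreducible OL
  have hϖmem : ϖ ∈ IsLocalRing.maximalIdeal OL := (IsLocalRing.mem_maximalIdeal _).mpr hϖ.not_isUnit
  obtain ⟨m, u, hju⟩ := IsDiscreteValuationRing.eq_unit_mul_pow_irreducible hjne hϖ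
  obtain ⟨e, u₀, hπu⟩ := IsDiscreteValuationRing.eq_unit_mul_pow_irreducible hπ'0 hϖ
  have he1 : 1 ≤ e := by
    rcases Nat.eq_zero_or_pos e with h | h
    · exfalso
      rw [h, pow_zero, mul_one] at hπu
      exact (IsLocalRing.mem_maximalIdeal _).mp hπ'mem (hπu ▸ u₀.isUnit)
    · exact h
  have hπ2 : (f (s - 1)) ^ 2 = (↑u₀ : OL) ^ 2 * ϖ ^ (e * 2) := by
    rw [hπu, mul_pow, ← pow_mul]
  have hπ4 : (f (s - 1)) ^ 4 = (↑u₀ : OL) ^ 4 * ϖ ^ (e * 4) := by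
    rw [hπu, mul_pow, ← pow_mul]
  -- the key exponent computation
  have hm2e : m = e * 2 := by
    have hfact := hj
    rw [hju, h2OL, hπ2, hπ4] at hfact
    rcases lt_trichotomy m (e * 2) with hlt | heq2 | hgt
    · exfalso
      obtain ⟨k, hk⟩ : ∃ k, e * 2 = m + (k + 1) := ⟨e * 2 - m - 1, by omega⟩
      rw [hk, pow_add, pow_succ] at hfact
      have hkey1 : (↑u * (↑u + ϖ * (↑u₀ ^ 2 * f ↑ε * f s * ϖ ^ k))) * ϖ ^ (m + m) =
          ((↑u₀ : OL) ^ 4 * t') * ϖ ^ (e * 4) := by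
        linear_combination hfact
      have hu1 : IsUnit ((↑u : OL) * (↑u + ϖ * (↑u₀ ^ 2 * f ↑ε * f s * ϖ ^ k))) :=
        u.isUnit.mul (unit_add_mem u.isUnit (Ideal.mul_mem_right _ _ hϖmem))
      have hu2 : IsUnit ((↑u₀ : OL) ^ 4 * t') := (u₀.isUnit.pow 4).mul htu'
      have := pow_eq_pow hϖ hu1 hu2 hkey1
      omega
    · exact heq2
    · exfalso
      obtain ⟨k, hk⟩ : ∃ k, m = e * 2 + (k + 1) := ⟨m - e * 2 - 1, by omega⟩
      rw [hk, pow_add, pow_succ] at hfact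
      have hkey1 : (↑u * (↑u₀ ^ 2 * f ↑ε * f s + ϖ * (↑u * ϖ ^ k))) *
          ϖ ^ ((e * 2 + (k + 1)) + e * 2) = ((↑u₀ : OL) ^ 4 * t') * ϖ ^ (e * 4) := by
        linear_combination hfact
      have hu1 : IsUnit ((↑u : OL) * (↑u₀ ^ 2 * f ↑ε * f s + ϖ * (↑u * ϖ ^ k))) :=
        u.isUnit.mul (unit_add_mem (((u₀.isUnit.pow 2).mul hεu').mul hsu')
          (Ideal.mul_mem_right _ _ hϖmem))
      have hu2 : IsUnit ((↑u₀ : OL) ^ 4 * t') := (u₀.isUnit.pow 4).mul htu'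
      have := pow_eq_pow hϖ hu1 hu2 hkey1
      omega
  -- construct c
  set cu : OLˣ := u * (u₀⁻¹) ^ 2 with hcudef
  have hjc : j = (f (s - 1)) ^ 2 * ↑cu := by
    rw [hju, hπ2, hm2e, hcudef]
    have hinv : (↑u₀ : OL) * ↑u₀⁻¹ = 1 := u₀.mul_inv
    rw [Units.val_mul, Units.val_pow_eq_pow_val]
    linear_combination (-(↑u * ϖ ^ (e * 2)) * (↑u₀ * ↑u₀⁻¹ + 1)) * hinv
  have hceq : (↑cu : OL) ^ 2 + f ↑ε * f s * ↑cu = t' := by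
    have hjcopy := hj
    rw [hjc, h2OL] at hjcopy
    have h4 : (f (s - 1)) ^ 4 * ((↑cu : OL) ^ 2 + f ↑ε * f s * ↑cu - t') = 0 := by
      linear_combination hjcopy
    rcases mul_eq_zero.mp h4 with h | h
    · exact absurd h (pow_ne_zero _ hπ'0)
    · exact sub_eq_zero.mp h
  have ht'eq : t' = -(7 + 4 * f s) := by
    rw [ht'def, map_neg, map_add, map_mul, map_ofNat, map_ofNat]
  -- L1
  have hL1 : ∀ a b : O, f a + f b * ↑cu ∈ IsLocalRing.maximalIdeal OL →
      (s - 1) ∣ a ∧ (s - 1) ∣ b := by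
    intro a b hab
    have hbdvd : (s - 1) ∣ b := by
      by_contra hbd
      have hbu : IsUnit b := by
        by_contra h
        exact hbd ((hmem_iff b).mp ((IsLocalRing.mem_maximalIdeal b).mpr h))
      obtain ⟨bu, hbu'⟩ := hbu
      have h1' : f ↑bu⁻¹ * f b = 1 := by
        rw [← map_mul, ← hbu', Units.inv_mul, map_one]
      have hcl : (↑cu : OL) + f (↑bu⁻¹ * a) ∈ IsLocalRing.maximalIdeal OL := by
        have hmm := Ideal.mul_mem_left _ (f ↑bu⁻¹) hab
        have heq2 : f ↑bu⁻¹ * (f a + f b * ↑cu) = ↑cu + f (↑bu⁻¹ * a) := by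
          rw [map_mul]; linear_combination (↑cu : OL) * h1'
        rwa [heq2] at hmm
      rcases hK2 (↑bu⁻¹ * a) with hl | hl
      · obtain ⟨z, hz⟩ := hl
        have hfz : f (↑bu⁻¹ * a) ∈ IsLocalRing.maximalIdeal OL := by
          rw [hz, map_mul]
          exact Ideal.mul_mem_right _ _ hπ'mem
        have hcumem : (↑cu : OL) ∈ IsLocalRing.maximalIdeal OL := by
          rw [show (↑cu : OL) = (↑cu + f (↑bu⁻¹ * a)) - f (↑bu⁻¹ * a) from by ring]
          exact Ideal.sub_mem _ hcl hfz
        exact (IsLocalRing.mem_maximalIdeal _).mp hcumem cu.isUnit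
      · obtain ⟨z, hz⟩ := hl
        have h1m : f (↑bu⁻¹ * a) - 1 ∈ IsLocalRing.maximalIdeal OL := by
          have heq4 : f (↑bu⁻¹ * a) - 1 = f (s - 1) * f z := by
            rw [← map_one f, ← map_sub, hz, map_mul]
          rw [heq4]
          exact Ideal.mul_mem_right _ _ hπ'mem
        have hx : (↑cu : OL) + 1 ∈ IsLocalRing.maximalIdeal OL := by
          rw [show (↑cu : OL) + 1 = (↑cu + f (↑bu⁻¹ * a)) - (f (↑bu⁻¹ * a) - 1) from by ring]
          exact Ideal.sub_mem _ hcl h1m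
        have hq' : f (8 + 4 * s - ↑ε * s) ∈ IsLocalRing.maximalIdeal OL := by
          have heq3 : f (8 + 4 * s - ↑ε * s) =
              ((↑cu : OL) + 1) * (2 - (↑cu + 1) - f ↑ε * f s) := by
            rw [map_sub, map_add, map_mul, map_mul, map_ofNat, map_ofNat]
            linear_combination hceq + ht'eq
          rw [heq3]
          exact Ideal.mul_mem_right _ _ hx
        have hqO : (s - 1) ∣ (8 + 4 * s - ↑ε * s) := by
          rw [← hmem_iff, ← hcomap]; exact hq'
        have h9 : (s - 1) ∣ (9 + 4 * s - ↑ε * s) := by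
          obtain ⟨β, hβ⟩ := h2dvd
          obtain ⟨α, hα⟩ := hεdvd1
          exact ⟨6 * β + 3 - s * α, by linear_combination 6 * hβ - s * hα⟩
        have h1dvd : (s - 1) ∣ (1 : O) := by
          have hd := dvd_sub h9 hqO
          rwa [show (9 + 4 * s - ↑ε * s) - (8 + 4 * s - ↑ε * s) = (1 : O) from by ring] at hd
        exact hπ.not_isUnit (isUnit_of_dvd_one h1dvd)
    obtain ⟨b₁, hb₁⟩ := hbdvd
    refine ⟨?_, ⟨b₁, hb₁⟩⟩
    have hfb : f b * ↑cu ∈ IsLocalRing.maximalIdeal OL := by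
      rw [hb₁, map_mul]
      exact Ideal.mul_mem_right _ _ (Ideal.mul_mem_right _ _ hπ'mem)
    have hfa : f a ∈ IsLocalRing.maximalIdeal OL := by
      rw [show f a = (f a + f b * ↑cu) - f b * ↑cu from by ring]
      exact Ideal.sub_mem _ hab hfb
    rw [← hmem_iff, ← hcomap]; exact hfa
  -- the key non-divisibility
  have hkey : ¬ (ϖ ^ 2 ∣ f (s - 1)) := by
    intro hdvd
    obtain ⟨w, hw⟩ := hdvd
    have hdvdall : ∀ n : ℕ, ∀ a b d g : O,
        f a + f b * ↑cu + f d * ϖ + f g * (↑cu * ϖ) = 0 →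
        (s - 1) ^ n ∣ a ∧ (s - 1) ^ n ∣ b ∧ (s - 1) ^ n ∣ d ∧ (s - 1) ^ n ∣ g := by
      intro n
      induction n with
      | zero => intro a b d g _; simp
      | succ n ih =>
        intro a b d g hrel
        have h1 : f a + f b * ↑cu ∈ IsLocalRing.maximalIdeal OL := by
          rw [show f a + f b * ↑cu = -(f d + f g * ↑cu) * ϖ from by linear_combination hrel]
          exact Ideal.mul_mem_left _ _ hϖmem
        obtain ⟨ha1, hb1⟩ := hL1 a b h1
        obtain ⟨a₁, ha₁⟩ := ha1
        obtain ⟨b₁, hb₁⟩ := hb1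
        have hfa : f a = f (s - 1) * f a₁ := by rw [← map_mul, ← ha₁]
        have hfb : f b = f (s - 1) * f b₁ := by rw [← map_mul, ← hb₁]
        have h2' : f d + f g * ↑cu ∈ IsLocalRing.maximalIdeal OL := by
          have hcancel : (f d + f g * ↑cu) * ϖ = (-(f a₁ + f b₁ * ↑cu) * w * ϖ) * ϖ := by
            linear_combination hrel - hfa - (↑cu : OL) * hfb - (f a₁ + f b₁ * ↑cu) * hw
          rw [mul_right_cancel₀ hϖ.ne_zero hcancel]
          exact Ideal.mul_mem_left _ _ hϖmem
        obtain ⟨hd1, hg1⟩ := hL1 d g h2'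
        obtain ⟨d₁, hd₁⟩ := hd1
        obtain ⟨g₁, hg₁⟩ := hg1
        have hfd : f d = f (s - 1) * f d₁ := by rw [← map_mul, ← hd₁]
        have hfg : f g = f (s - 1) * f g₁ := by rw [← map_mul, ← hg₁]
        have hrel' : f a₁ + f b₁ * ↑cu + f d₁ * ϖ + f g₁ * (↑cu * ϖ) = 0 := by
          have hz0 : f (s - 1) * (f a₁ + f b₁ * ↑cu + f d₁ * ϖ + f g₁ * (↑cu * ϖ)) = 0 := by
            linear_combination hrel - hfa - (↑cu : OL) * hfb - ϖ * hfd - (↑cu * ϖ) * hfg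
          rcases mul_eq_zero.mp hz0 with h | h
          · exact absurd h hπ'0
          · exact h
        obtain ⟨i1, i2, i3, i4⟩ := ih a₁ b₁ d₁ g₁ hrel'
        obtain ⟨z1, hz1⟩ := i1; obtain ⟨z2, hz2⟩ := i2
        obtain ⟨z3, hz3⟩ := i3; obtain ⟨z4, hz4⟩ := i4
        exact ⟨⟨z1, by rw [ha₁, hz1]; ring⟩, ⟨z2, by rw [hb₁, hz2]; ring⟩,
          ⟨z3, by rw [hd₁, hz3]; ring⟩, ⟨z4, by rw [hg₁, hz4]; ring⟩⟩
    have hli : LinearIndependent O ![(1 : OL), ↑cu, ϖ, ↑cu * ϖ] := by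
      rw [Fintype.linearIndependent_iff]
      intro g hg
      have hg' : f (g 0) + f (g 1) * ↑cu + f (g 2) * ϖ + f (g 3) * (↑cu * ϖ) = 0 := by
        rw [Fin.sum_univ_four] at hg
        simp only [Matrix.cons_val_zero, Matrix.cons_val_one, Matrix.head_cons,
          Matrix.cons_val_two, Matrix.cons_val_three, Matrix.tail_cons,
          Algebra.smul_def] at hg
        linear_combination hg
      intro k
      have hzero : ∀ x : O, (∀ n : ℕ, (s - 1) ^ n ∣ x) → x = 0 := fun x hx =>
        eq_zero_of_forall_dvd hπ hx
      fin_cases k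
      · exact hzero _ fun n => (hdvdall n _ _ _ _ hg').1
      · exact hzero _ fun n => (hdvdall n _ _ _ _ hg').2.1
      · exact hzero _ fun n => (hdvdall n _ _ _ _ hg').2.2.1
      · exact hzero _ fun n => (hdvdall n _ _ _ _ hg').2.2.2
    have hcard4 := bs.card_le_card_of_linearIndependent hli
    norm_num [Fintype.card_fin] at hcard4
  -- conclusion
  have hϖspan : IsLocalRing.maximalIdeal OL = Ideal.span {ϖ} :=
    (IsDiscreteValuationRing.irreducible_iff_uniformizer _).mp hϖ
  have hπ'ϖ : f (s - 1) ∣ ϖ := by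
    have hd : ϖ ∣ f (s - 1) := Ideal.mem_span_singleton.mp (hϖspan ▸ hπ'mem)
    obtain ⟨k, hk⟩ := hd
    have hku : IsUnit k := by
      by_contra hk'
      obtain ⟨k₂, hk₂⟩ := Ideal.mem_span_singleton.mp
        (hϖspan ▸ (IsLocalRing.mem_maximalIdeal k).mpr hk')
      exact hkey ⟨k₂, by rw [hk, hk₂]; ring⟩
    obtain ⟨ku, hku'⟩ := hku
    exact ⟨↑ku⁻¹, by rw [hk, ← hku', mul_assoc, Units.mul_inv, mul_one]⟩
  rw [hmO, Ideal.map_span, Set.image_singleton]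
  apply le_antisymm
  · rw [Ideal.span_le, Set.singleton_subset_iff]; exact hπ'mem
  · rw [hϖspan, Ideal.span_le, Set.singleton_subset_iff]
    exact Ideal.mem_span_singleton.mpr hπ'ϖ
end

section
/- Let K be a finite extension of ℚ_p with p ∈ {2,3}, and let δ be a unit of O_K. Then there exists a_6 ∈ O_K^× such that -a_6 - 2^4·3^3·a_6^2 = δ; consequently the Weierstrass cubic y² + xy = x³ + a_6 has discriminant δ and defines an elliptic curve over K with good reduction. -/
open Polynomial IsLocalRing

/-- For `p ∈ {2,3}` and a unit `δ` of the ring of integers `O` of a finite extension of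
`ℚ_p` (modelled as a complete discrete valuation ring of characteristic zero with finite
residue field of characteristic `p`), there is a unit `a₆` with
`-a₆ - 2^4·3^3·a₆² = δ`; consequently the Weierstrass cubic `y² + xy = x³ + a₆` has
discriminant `δ`, hence defines an elliptic curve with good reduction. -/
theorem stmt18 (p : ℕ) [Fact p.Prime] (hp : p = 2 ∨ p = 3)
    (O : Type) [CommRing O] [IsDomain O] [IsDiscreteValuationRing O]
    [IsAdicComplete (IsLocalRing.maximalIdeal O) O] [CharZero O]
    [CharP (IsLocalRing.ResidueField O) p] [Finite (IsLocalRing.ResidueField O)]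
    (δ : Oˣ) :
    ∃ a₆ : O, IsUnit a₆ ∧ -a₆ - 2 ^ 4 * 3 ^ 3 * a₆ ^ 2 = (δ : O) ∧
      (WeierstrassCurve.mk 1 0 0 0 a₆).Δ = (δ : O) := by
  -- 432 lies in the maximal ideal since the residue characteristic is 2 or 3
  have h432 : (432 : O) ∈ maximalIdeal O := by
    rw [← residue_eq_zero_iff]
    have : (residue O) (432 : O) = ((432 : ℕ) : ResidueField O) := by
      rw [show ((432 : O)) = ((432 : ℕ) : O) by norm_num, map_natCast]
    rw [this, CharP.cast_eq_zero_iff (ResidueField O) p]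
    rcases hp with h | h <;> subst h <;> norm_num
  -- Hensel's lemma for b² + b + 432δ = 0
  have H := (IsAdicComplete.henselianRing O (maximalIdeal O)).is_henselian
    (X ^ 2 + X + C (432 * (δ : O)))
    (by
      rw [add_assoc]
      apply Polynomial.monic_X_pow_add
      apply lt_of_le_of_lt (Polynomial.degree_add_le _ _)
      rw [max_lt_iff]
      exact ⟨by simpa using (by norm_num : (1:WithBot ℕ) < 2),
        lt_of_le_of_lt Polynomial.degree_C_le (by norm_num)⟩)
    0
    (by
      simpa using Ideal.mul_mem_right (δ : O) _ h432)
    (by simp)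
  obtain ⟨b, hroot, hbm⟩ := H
  simp only [IsRoot, eval_add, eval_pow, eval_X, eval_C, sub_zero] at hroot hbm
  -- 1 + b is a unit
  have hunit : IsUnit (1 + b) := by
    rw [add_comm]
    have := isUnit_one_sub_self_of_mem_nonunits (-b)
      (by simpa using (maximalIdeal O).neg_mem hbm)
    simpa [add_comm] using this
  obtain ⟨v, hv⟩ := hunit
  set a : O := ((-δ * v⁻¹ : Oˣ) : O) with ha
  have haunit : IsUnit a := ((-δ) * v⁻¹).isUnit
  have hva : (v : O) * a = -(δ : O) := by
    rw [ha]
    push_cast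
    rw [mul_comm, mul_assoc]
    simp
  have hb432 : 432 * a = b := by
    have hbv : (v : O) * b = -(432 * (δ : O)) := by
      rw [hv]; linear_combination hroot
    have h1 : (v : O) * (432 * a) = (v : O) * b := by
      rw [hbv, show (v : O) * (432 * a) = 432 * ((v : O) * a) by ring, hva]; ring
    exact mul_left_cancel₀ v.ne_zero h1
  have key : -a - 2 ^ 4 * 3 ^ 3 * a ^ 2 = (δ : O) := by
    have h2 : -a * (1 + b) = -a * (v : O) := by rw [hv]
    have h3 : -a * (v : O) = (δ : O) := by
      rw [show -a * (v : O) = -((v : O) * a) by ring, hva]; ring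
    calc -a - 2 ^ 4 * 3 ^ 3 * a ^ 2 = -a * (1 + 432 * a) := by ring
      _ = -a * (1 + b) := by rw [hb432]
      _ = (δ : O) := by rw [h2, h3]
  refine ⟨a, haunit, key, ?_⟩
  rw [← key]
  simp only [WeierstrassCurve.Δ, WeierstrassCurve.b₂, WeierstrassCurve.b₄,
    WeierstrassCurve.b₆, WeierstrassCurve.b₈]
  ring
end
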